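/- arXiv:math/0506366 — 6 statements merged into one kernel-verified Lean document; each statement's English description precedes it below -/
import Mathlib

section
/- Let n ≥ 1 and let τ : ℂⁿ → ℝ be a C² nonnegative smoothly plurisubharmonic function such that (1/r^{2n}) · ∫_{Δ_r} τ dλ tends to 0 as r → ∞. Then τ is identically zero on ℂⁿ. -/
open MeasureTheory Filter

/-- The Laplacian of a function `g : ℂ → ℝ`, where `ℂ` is regarded as a two-dimensional
real inner product space with orthonormal basis `{1, I}`. -/
noncomputable def lap2 (g : ℂ → ℝ) (w : ℂ) : ℝ :=
  iteratedFDeriv ℝ 2 g w ![1, 1] + iteratedFDeriv ℝ 2 g w ![Complex.I, Complex.I]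

/-- A `C²` function `τ : ℂⁿ → ℝ` is smoothly plurisubharmonic if its restriction to every
complex line has nonnegative Laplacian. -/
def SmoothlyPsh (n : ℕ) (τ : (Fin n → ℂ) → ℝ) : Prop :=
  ∀ a b : Fin n → ℂ, ∀ w : ℂ, 0 ≤ lap2 (fun u : ℂ => τ (a + u • b)) w

/-- The open polydisc of polyradius `(r, …, r)` in `ℂⁿ`. -/
def polydisc (n : ℕ) (r : ℝ) : Set (Fin n → ℂ) :=
  {z | ∀ j, ‖z j‖ < r}

open Metric intervalIntegral Set

noncomputable def vv (θ : ℝ) : ℂ := Complex.exp (θ * Complex.I)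

lemma vv_cont : Continuous vv :=
  Complex.continuous_exp.comp (Complex.continuous_ofReal.mul continuous_const)

lemma vv_deriv (θ : ℝ) : HasDerivAt vv (Complex.I * vv θ) θ := by
  have h1 : HasDerivAt (fun θ : ℝ => (θ : ℂ) * Complex.I) Complex.I θ := by
    simpa using (Complex.ofRealCLM.hasDerivAt (x := θ)).mul_const Complex.I
  have h2 := h1.cexp
  rw [mul_comm] at h2
  exact h2

lemma vv_pi : vv Real.pi = -1 := Complex.exp_pi_mul_I

lemma vv_neg_pi : vv (-Real.pi) = -1 := by
  have : ((-Real.pi : ℝ) : ℂ) * Complex.I = -(Real.pi * Complex.I) := by push_cast; ring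
  rw [vv, this, Complex.exp_neg, Complex.exp_pi_mul_I]
  norm_num

lemma vv_cos_sin (θ : ℝ) : vv θ = Real.cos θ • (1 : ℂ) + Real.sin θ • Complex.I := by
  rw [vv, Complex.exp_mul_I]
  simp [Complex.real_smul, ← Complex.ofReal_cos, ← Complex.ofReal_sin]

lemma I_vv (θ : ℝ) : Complex.I * vv θ = (-Real.sin θ) • (1 : ℂ) + Real.cos θ • Complex.I := by
  rw [vv_cos_sin θ, mul_add, mul_smul_comm, mul_smul_comm, Complex.I_mul_I, mul_one]
  module

lemma rot_invariance {g : ℂ → ℝ} (w : ℂ) (θ : ℝ) :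
    (fderiv ℝ (fderiv ℝ g) w (vv θ)) (vv θ)
      + (fderiv ℝ (fderiv ℝ g) w (Complex.I * vv θ)) (Complex.I * vv θ) = lap2 g w := by
  have hlap : lap2 g w = (fderiv ℝ (fderiv ℝ g) w 1) 1
      + (fderiv ℝ (fderiv ℝ g) w Complex.I) Complex.I := by
    rw [lap2, iteratedFDeriv_two_apply, iteratedFDeriv_two_apply]
    simp
  rw [hlap, I_vv θ, vv_cos_sin θ]
  simp only [map_add, _root_.map_smul, map_neg, ContinuousLinearMap.add_apply,
    ContinuousLinearMap.coe_smul', Pi.smul_apply, ContinuousLinearMap.neg_apply,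
    smul_eq_mul, neg_smul]
  have h := Real.sin_sq_add_cos_sq θ
  linear_combination h * (((fderiv ℝ (fderiv ℝ g) w) 1) 1
    + ((fderiv ℝ (fderiv ℝ g) w) Complex.I) Complex.I)

lemma hasDerivAt_param (F F' : ℝ → ℝ → ℝ) (a b x₀ : ℝ)
    (hF : Continuous fun p : ℝ × ℝ => F p.1 p.2)
    (hF' : Continuous fun p : ℝ × ℝ => F' p.1 p.2)
    (hd : ∀ x t, HasDerivAt (fun y => F y t) (F' x t) x) :
    HasDerivAt (fun x => ∫ t in a..b, F x t) (∫ t in a..b, F' x₀ t) x₀ := by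
  obtain ⟨M, hM⟩ := ((isCompact_Icc (a := x₀ - 1) (b := x₀ + 1)).prod
      (isCompact_uIcc (a := a) (b := b))).exists_bound_of_continuousOn hF'.continuousOn
  refine (intervalIntegral.hasDerivAt_integral_of_dominated_loc_of_deriv_le
    (F := F) (F' := F') (bound := fun _ => M) (s := ball x₀ 1) (ball_mem_nhds x₀ one_pos) ?_ ?_ ?_ ?_ ?_ ?_).2
  · exact Eventually.of_forall fun x =>
      ((hF.comp (Continuous.prodMk_right x)).aestronglyMeasurable).restrict
  · exact (hF.comp (Continuous.prodMk_right x₀)).intervalIntegrable a b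
  · exact ((hF'.comp (Continuous.prodMk_right x₀)).aestronglyMeasurable).restrict
  · refine Eventually.of_forall fun t ht x hx => hM (x, t) ⟨?_, ?_⟩
    · have := abs_lt.1 (by simpa [Real.dist_eq] using hx)
      constructor <;> linarith [this.1, this.2]
    · exact Set.uIoc_subset_uIcc ht
  · exact intervalIntegrable_const
  · exact Eventually.of_forall fun t _ x _ => hd x t

lemma oneDim {g : ℂ → ℝ} (hg : ContDiff ℝ 2 g) (hl : ∀ w, 0 ≤ lap2 g w)
    {r : ℝ} (hr : 0 < r) :
    Real.pi * r ^ 2 * g 0 ≤ ∫ w in ball (0 : ℂ) r, g w := by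
  have hgc : Continuous g := hg.continuous
  have hg1 : ContDiff ℝ 1 (fderiv ℝ g) := hg.fderiv_right (by norm_num)
  have hcfd : Continuous (fderiv ℝ g) := hg1.continuous
  have hcd2 : Continuous (fderiv ℝ (fderiv ℝ g)) := hg1.continuous_fderiv one_ne_zero
  have hdiff : ∀ w, HasFDerivAt g (fderiv ℝ g w) w := fun w =>
    (hg.differentiable two_ne_zero w).hasFDerivAt
  have hdiff2 : ∀ w, HasFDerivAt (fderiv ℝ g) (fderiv ℝ (fderiv ℝ g) w) w := fun w =>
    (hg1.differentiable one_ne_zero w).hasFDerivAt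
  have hcurve : ∀ (t s : ℝ), HasDerivAt (fun s : ℝ => s • vv t) (vv t) s := fun t s => by
    simpa using (hasDerivAt_id s).smul_const (vv t)
  have hpc : Continuous fun p : ℝ × ℝ => p.1 • vv p.2 :=
    continuous_fst.smul (vv_cont.comp continuous_snd)
  set A : ℝ → ℝ := fun s => ∫ θ in (-Real.pi)..Real.pi, g (s • vv θ) with hAdef
  set B : ℝ → ℝ := fun s =>
    ∫ θ in (-Real.pi)..Real.pi, (fderiv ℝ g (s • vv θ)) (vv θ) with hBdef
  -- derivative of A
  have hA : ∀ s, HasDerivAt A (B s) s := by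
    intro s
    exact hasDerivAt_param (fun s t => g (s • vv t))
      (fun s t => (fderiv ℝ g (s • vv t)) (vv t)) _ _ s
      (hgc.comp hpc) ((hcfd.comp hpc).clm_apply (vv_cont.comp continuous_snd))
      (fun x t => (hdiff _).comp_hasDerivAt x (hcurve t x))
  -- derivative of B
  have hB : ∀ s, HasDerivAt B
      (∫ θ in (-Real.pi)..Real.pi, (fderiv ℝ (fderiv ℝ g) (s • vv θ) (vv θ)) (vv θ)) s := by
    intro s
    refine hasDerivAt_param (fun s t => (fderiv ℝ g (s • vv t)) (vv t))
      (fun s t => (fderiv ℝ (fderiv ℝ g) (s • vv t) (vv t)) (vv t)) _ _ s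
      ((hcfd.comp hpc).clm_apply (vv_cont.comp continuous_snd))
      (((hcd2.comp hpc).clm_apply (vv_cont.comp continuous_snd)).clm_apply
        (vv_cont.comp continuous_snd)) ?_
    intro x t
    have h1 := (hdiff2 (x • vv t)).comp_hasDerivAt x (hcurve t x)
    have h2 := h1.clm_apply (hasDerivAt_const x (vv t))
    simpa using h2
  -- continuity in θ of the integrands
  have contv : ∀ s : ℝ, Continuous fun θ : ℝ => s • vv θ := fun s => vv_cont.const_smul s
  have contIv : Continuous fun θ : ℝ => Complex.I * vv θ := continuous_const.mul vv_cont
  have contH : ∀ s : ℝ, Continuous fun θ =>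
      (fderiv ℝ (fderiv ℝ g) (s • vv θ) (vv θ)) (vv θ) := fun s =>
    ((hcd2.comp (contv s)).clm_apply vv_cont).clm_apply vv_cont
  have contH' : ∀ s : ℝ, Continuous fun θ =>
      (fderiv ℝ (fderiv ℝ g) (s • vv θ) (Complex.I * vv θ)) (Complex.I * vv θ) := fun s =>
    ((hcd2.comp (contv s)).clm_apply contIv).clm_apply contIv
  have contB1 : ∀ s : ℝ, Continuous fun θ => (fderiv ℝ g (s • vv θ)) (vv θ) := fun s =>
    (hcfd.comp (contv s)).clm_apply vv_cont
  -- the periodicity identity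
  have key : ∀ s : ℝ, s * B s = s * s *
      ∫ θ in (-Real.pi)..Real.pi,
        (fderiv ℝ (fderiv ℝ g) (s • vv θ) (Complex.I * vv θ)) (Complex.I * vv θ) := by
    intro s
    have hP : ∀ θ : ℝ, HasDerivAt
        (fun θ => (fderiv ℝ g (s • vv θ)) (s • (Complex.I * vv θ)))
        (s * s * ((fderiv ℝ (fderiv ℝ g) (s • vv θ) (Complex.I * vv θ)) (Complex.I * vv θ))
          - s * ((fderiv ℝ g (s • vv θ)) (vv θ))) θ := by
      intro θ
      have hu := (hdiff2 (s • vv θ)).comp_hasDerivAt θ ((vv_deriv θ).const_smul s)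
      have h2 := hu.clm_apply (((vv_deriv θ).const_mul Complex.I).const_smul s)
      refine h2.congr_deriv ?_
      have h1 : Complex.I * (Complex.I * vv θ) = -vv θ := by
        rw [← mul_assoc, Complex.I_mul_I, neg_one_mul]
      rw [h1]
      simp only [_root_.map_smul, map_neg, ContinuousLinearMap.coe_smul', Pi.smul_apply,
        ContinuousLinearMap.neg_apply, smul_eq_mul, smul_neg, Function.comp_apply]
      ring
    have hint : IntervalIntegrable (fun θ =>
        s * s * ((fderiv ℝ (fderiv ℝ g) (s • vv θ) (Complex.I * vv θ)) (Complex.I * vv θ))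
          - s * ((fderiv ℝ g (s • vv θ)) (vv θ))) MeasureTheory.volume
        (-Real.pi) Real.pi :=
      ((continuous_const.mul (contH' s)).sub (continuous_const.mul (contB1 s))).intervalIntegrable _ _
    have hftc := intervalIntegral.integral_eq_sub_of_hasDerivAt (fun θ _ => hP θ) hint
    have hends : (fderiv ℝ g (s • vv Real.pi)) (s • (Complex.I * vv Real.pi))
        - (fderiv ℝ g (s • vv (-Real.pi))) (s • (Complex.I * vv (-Real.pi))) = 0 := by
      rw [vv_pi, vv_neg_pi, sub_self]
    rw [hends] at hftc
    rw [intervalIntegral.integral_sub (((contH' s).intervalIntegrable _ _).const_mul _)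
      (((contB1 s).intervalIntegrable _ _).const_mul _),
      intervalIntegral.integral_const_mul, intervalIntegral.integral_const_mul] at hftc
    rw [hBdef]
    linarith [hftc]
  have hBcont : Continuous B := by
    have hd : Differentiable ℝ B := fun s => (hB s).differentiableAt
    exact hd.continuous
  have hAcont : Continuous A := by
    have hd : Differentiable ℝ A := fun s => (hA s).differentiableAt
    exact hd.continuous
  have hlapint : ∀ x : ℝ, 0 ≤ ∫ θ in (-Real.pi)..Real.pi, lap2 g (x • vv θ) := fun x =>
    intervalIntegral.integral_nonneg (by linarith [Real.pi_pos]) (fun θ _ => hl _)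
  have hsum : ∀ x : ℝ,
      (∫ θ in (-Real.pi)..Real.pi,
        (fderiv ℝ (fderiv ℝ g) (x • vv θ) (Complex.I * vv θ)) (Complex.I * vv θ))
      + (∫ θ in (-Real.pi)..Real.pi, (fderiv ℝ (fderiv ℝ g) (x • vv θ) (vv θ)) (vv θ))
      = ∫ θ in (-Real.pi)..Real.pi, lap2 g (x • vv θ) := by
    intro x
    rw [← intervalIntegral.integral_add ((contH' x).intervalIntegrable _ _)
      ((contH x).intervalIntegrable _ _)]
    refine intervalIntegral.integral_congr fun θ _ => ?_
    rw [add_comm]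
    exact rot_invariance _ _
  have hCmono : MonotoneOn (fun s => s * B s) (Set.Ici (0 : ℝ)) := by
    refine monotoneOn_of_deriv_nonneg (convex_Ici 0)
      (continuous_id.mul hBcont).continuousOn
      (fun x _ => ((hasDerivAt_id' (x := x)).mul (hB x)).differentiableAt.differentiableWithinAt) ?_
    intro x hx
    rw [interior_Ici] at hx
    rw [HasDerivAt.deriv (f := fun s => s * B s) ((hasDerivAt_id' (x := x)).mul (hB x))]
    have h1 := key x
    have h2 := hsum x
    have h3 := hlapint x
    set P := ∫ θ in (-Real.pi)..Real.pi,
      (fderiv ℝ (fderiv ℝ g) (x • vv θ) (Complex.I * vv θ)) (Complex.I * vv θ) with hPd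
    set Q := ∫ θ in (-Real.pi)..Real.pi,
      (fderiv ℝ (fderiv ℝ g) (x • vv θ) (vv θ)) (vv θ) with hQd
    set L := ∫ θ in (-Real.pi)..Real.pi, lap2 g (x • vv θ) with hLd
    by_contra hneg
    push_neg at hneg
    have h5 : x * (1 * B x + x * Q) < 0 := mul_neg_of_pos_of_neg hx hneg
    have h4 : x * x * P + x * x * Q = x * x * L := by linear_combination (x * x) * h2
    have hxx : 0 ≤ x * x * L := mul_nonneg (mul_nonneg hx.le hx.le) h3
    nlinarith [h1, h4, hxx, h5]
  have hBnonneg : ∀ s : ℝ, 0 < s → 0 ≤ B s := by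
    intro s hs
    have h0 : (0 : ℝ) * B 0 ≤ s * B s := hCmono Set.self_mem_Ici hs.le hs.le
    nlinarith [h0, hs]
  have hA0 : A 0 = 2 * Real.pi * g 0 := by
    rw [hAdef]
    simp only [zero_smul, intervalIntegral.integral_const, smul_eq_mul, sub_neg_eq_add]
    ring
  have hAlower : ∀ s : ℝ, 0 ≤ s → 2 * Real.pi * g 0 ≤ A s := by
    intro s hs
    have hm : MonotoneOn A (Set.Ici (0 : ℝ)) := by
      refine monotoneOn_of_deriv_nonneg (convex_Ici 0) hAcont.continuousOn
        (fun x _ => (hA x).differentiableAt.differentiableWithinAt) ?_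
      intro x hx
      rw [interior_Ici] at hx
      rw [(hA x).deriv]
      exact hBnonneg x hx
    have := hm Set.self_mem_Ici hs hs
    rwa [hA0] at this
  -- polar coordinates
  have hint2 : IntegrableOn (fun p : ℝ × ℝ => p.1 * g (p.1 • vv p.2))
      (Set.Ioo (0 : ℝ) r ×ˢ Set.Ioo (-Real.pi) Real.pi) (volume.prod volume) := by
    have hc : Continuous fun p : ℝ × ℝ => p.1 * g (p.1 • vv p.2) :=
      continuous_fst.mul (hgc.comp hpc)
    have hcc : IntegrableOn (fun p : ℝ × ℝ => p.1 * g (p.1 • vv p.2))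
        (Set.Icc (0 : ℝ) r ×ˢ Set.Icc (-Real.pi) Real.pi) (volume.prod volume) :=
      hc.continuousOn.integrableOn_compact (isCompact_Icc.prod isCompact_Icc)
    exact hcc.mono_set (Set.prod_mono Set.Ioo_subset_Icc_self Set.Ioo_subset_Icc_self)
  have hpolar : ∫ w in ball (0 : ℂ) r, g w = ∫ s in Set.Ioo (0 : ℝ) r, s * A s := by
    have htarget : MeasurableSet Complex.polarCoord.target := by
      rw [Complex.polarCoord_target]
      exact measurableSet_Ioi.prod measurableSet_Ioo
    have h1 : Set.EqOn
        (fun p : ℝ × ℝ => p.1 • (ball (0 : ℂ) r).indicator g (Complex.polarCoord.symm p))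
        ((Set.Ioo (0 : ℝ) r ×ˢ Set.Ioo (-Real.pi) Real.pi).indicator
          (fun p : ℝ × ℝ => p.1 * g (p.1 • vv p.2)))
        Complex.polarCoord.target := by
      intro p hp
      rw [Complex.polarCoord_target] at hp
      obtain ⟨hp1, hp2⟩ := hp
      rw [Set.mem_Ioi] at hp1
      dsimp only
      have hsymm : Complex.polarCoord.symm p = p.1 • vv p.2 := by
        rw [Complex.polarCoord_symm_apply, Complex.real_smul, vv, Complex.exp_mul_I,
          Complex.ofReal_cos, Complex.ofReal_sin]
      have hmemball : Complex.polarCoord.symm p ∈ ball (0 : ℂ) r ↔ p.1 < r := by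
        rw [mem_ball_zero_iff, Complex.norm_polarCoord_symm,
          abs_of_pos hp1]
      by_cases hlt : p.1 < r
      · have hmem2 : p ∈ Set.Ioo (0 : ℝ) r ×ˢ Set.Ioo (-Real.pi) Real.pi := ⟨⟨hp1, hlt⟩, hp2⟩
        rw [Set.indicator_of_mem (hmemball.mpr hlt), Set.indicator_of_mem hmem2,
          hsymm, smul_eq_mul]
      · have hnot2 : p ∉ Set.Ioo (0 : ℝ) r ×ˢ Set.Ioo (-Real.pi) Real.pi := fun h => hlt h.1.2
        rw [Set.indicator_of_notMem (fun h => hlt (hmemball.mp h)),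
          Set.indicator_of_notMem hnot2, smul_zero]
    have e0 : (∫ p in Complex.polarCoord.target,
        p.1 • (ball (0 : ℂ) r).indicator g (Complex.polarCoord.symm p))
        = ∫ w in ball (0 : ℂ) r, g w :=
      (Complex.integral_comp_polarCoord_symm _).trans
        (MeasureTheory.integral_indicator measurableSet_ball)
    have e1 : (∫ p in Complex.polarCoord.target,
        p.1 • (ball (0 : ℂ) r).indicator g (Complex.polarCoord.symm p))
        = ∫ p in Complex.polarCoord.target,
          (Set.Ioo (0 : ℝ) r ×ˢ Set.Ioo (-Real.pi) Real.pi).indicator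
            (fun p : ℝ × ℝ => p.1 * g (p.1 • vv p.2)) p :=
      MeasureTheory.setIntegral_congr_fun htarget h1
    rw [← e0, e1,
      MeasureTheory.setIntegral_indicator (measurableSet_Ioo.prod measurableSet_Ioo)]
    have h2 : Complex.polarCoord.target ∩ (Set.Ioo (0 : ℝ) r ×ˢ Set.Ioo (-Real.pi) Real.pi)
        = Set.Ioo (0 : ℝ) r ×ˢ Set.Ioo (-Real.pi) Real.pi := by
      rw [Complex.polarCoord_target]
      exact Set.inter_eq_self_of_subset_right (Set.prod_mono Set.Ioo_subset_Ioi_self le_rfl)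
    rw [h2, MeasureTheory.Measure.volume_eq_prod, MeasureTheory.setIntegral_prod _ hint2]
    refine MeasureTheory.setIntegral_congr_fun measurableSet_Ioo fun s hs => ?_
    rw [hAdef]
    rw [← MeasureTheory.integral_Ioc_eq_integral_Ioo,
      ← intervalIntegral.integral_of_le (by linarith [Real.pi_pos] : -Real.pi ≤ Real.pi)]
    simp [intervalIntegral.integral_const_mul]
  rw [hpolar]
  have hle : ∫ s in Set.Ioo (0 : ℝ) r, s * (2 * Real.pi * g 0)
      ≤ ∫ s in Set.Ioo (0 : ℝ) r, s * A s := by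
    refine MeasureTheory.setIntegral_mono_on
      (((continuous_id.mul continuous_const).integrableOn_Icc).mono_set
        Set.Ioo_subset_Icc_self)
      (((continuous_id.mul hAcont).integrableOn_Icc).mono_set Set.Ioo_subset_Icc_self)
      measurableSet_Ioo ?_
    exact fun s hs => mul_le_mul_of_nonneg_left (hAlower s hs.1.le) hs.1.le
  have hcalc : ∫ s in Set.Ioo (0 : ℝ) r, s * (2 * Real.pi * g 0)
      = Real.pi * r ^ 2 * g 0 := by
    rw [← MeasureTheory.integral_Ioc_eq_integral_Ioo,
      ← intervalIntegral.integral_of_le hr.le, intervalIntegral.integral_mul_const,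
      integral_id]
    ring
  linarith [hle, hcalc]

lemma polydisc_def (n : ℕ) (r : ℝ) :
    polydisc n r = {z : Fin n → ℂ | ∀ j, ‖z j‖ < r} := rfl

lemma measurableSet_polydisc (n : ℕ) (r : ℝ) : MeasurableSet (polydisc n r) := by
  have : polydisc n r = Set.pi Set.univ (fun _ : Fin n => ball (0 : ℂ) r) := by
    ext z
    simp [polydisc, Set.mem_univ_pi, mem_ball_zero_iff]
  rw [this]
  exact MeasurableSet.univ_pi fun _ => measurableSet_ball

lemma polydisc_subset_compact (n : ℕ) (r : ℝ) :
    polydisc n r ⊆ Set.pi Set.univ (fun _ : Fin n => closedBall (0 : ℂ) r) := by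
  intro z hz
  rw [Set.mem_univ_pi]
  intro i
  rw [mem_closedBall_zero_iff]
  exact (hz i).le

lemma integrableOn_polydisc {n : ℕ} {f : (Fin n → ℂ) → ℝ} (hf : Continuous f) (r : ℝ) :
    IntegrableOn f (polydisc n r) volume :=
  (hf.continuousOn.integrableOn_compact
    (isCompact_univ_pi fun _ => isCompact_closedBall _ _)).mono_set
    (polydisc_subset_compact n r)

lemma cons_contDiff {k : ℕ} (x : ℂ) :
    ContDiff ℝ 2 (fun y : Fin k → ℂ => (Fin.cons x y : Fin (k + 1) → ℂ)) := by
  apply contDiff_pi.2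
  intro j
  refine Fin.cases ?_ ?_ j
  · simpa using contDiff_const (c := x)
  · intro i
    simpa using contDiff_apply ℝ ℂ (i : Fin k)

lemma cons0_contDiff {k : ℕ} :
    ContDiff ℝ 2 (fun x : ℂ => (Fin.cons x 0 : Fin (k + 1) → ℂ)) := by
  apply contDiff_pi.2
  intro j
  refine Fin.cases ?_ ?_ j
  · exact contDiff_id
  · intro i
    simpa using contDiff_const (c := (0 : ℂ))

lemma cons_add_smul {k : ℕ} (x : ℂ) (a b : Fin k → ℂ) (u : ℂ) :
    (Fin.cons x (a + u • b) : Fin (k + 1) → ℂ)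
      = Fin.cons x a + u • (Fin.cons 0 b : Fin (k + 1) → ℂ) := by
  funext j
  refine Fin.cases ?_ ?_ j
  · simp
  · intro i
    simp

lemma cons_smul_e0 {k : ℕ} (u : ℂ) :
    (Fin.cons u 0 : Fin (k + 1) → ℂ) = 0 + u • (Fin.cons 1 0 : Fin (k + 1) → ℂ) := by
  funext j
  refine Fin.cases ?_ ?_ j
  · simp
  · intro i
    simp

lemma cons_zero_zero {k : ℕ} : (Fin.cons 0 0 : Fin (k + 1) → ℂ) = 0 := by
  funext j
  refine Fin.cases ?_ ?_ j
  · simp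
  · intro i
    simp

lemma psh_key : ∀ (k : ℕ) (g : (Fin k → ℂ) → ℝ), ContDiff ℝ 2 g → SmoothlyPsh k g →
    ∀ r : ℝ, 0 < r → (Real.pi * r ^ 2) ^ k * g 0 ≤ ∫ w in polydisc k r, g w := by
  intro k
  induction k with
  | zero =>
    intro g hg hpsh r hr
    have h1 : polydisc 0 r = Set.univ := by
      ext z
      simp [polydisc]
    have h2 : (volume : Measure (Fin 0 → ℂ)) Set.univ = 1 := by
      rw [← Set.pi_univ, MeasureTheory.volume_pi_pi]
      simp
    rw [h1, MeasureTheory.Measure.restrict_univ, MeasureTheory.integral_unique, MeasureTheory.measureReal_def, h2]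
    simp only [ENNReal.toReal_one, one_smul, pow_zero, one_mul]
    exact le_of_eq (congrArg g (Subsingleton.elim _ _))
  | succ k ih =>
    intro g hg hpsh r hr
    set e := MeasurableEquiv.piFinSuccAbove (fun _ : Fin (k + 1) => ℂ) 0 with he
    have hsymm_eq : ∀ p : ℂ × (Fin k → ℂ), e.symm p = Fin.cons p.1 p.2 := by
      intro p
      simp [he, MeasurableEquiv.piFinSuccAbove_symm_apply, Fin.insertNthEquiv,
        Fin.insertNth_zero']
    have hmeas_poly : MeasurableSet (polydisc k r) := measurableSet_polydisc k r
    have hmeas_prod : MeasurableSet (ball (0 : ℂ) r ×ˢ polydisc k r) :=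
      measurableSet_ball.prod hmeas_poly
    have hpre : (⇑e.symm) ⁻¹' polydisc (k + 1) r = ball (0 : ℂ) r ×ˢ polydisc k r := by
      ext p
      simp only [Set.mem_preimage, polydisc, Set.mem_setOf_eq, hsymm_eq p, Set.mem_prod,
        mem_ball_zero_iff]
      constructor
      · intro h
        exact ⟨by simpa using h 0, fun i => by simpa using h i.succ⟩
      · intro h j
        refine Fin.cases ?_ ?_ j
        · simpa using h.1
        · intro i
          simpa using h.2 i
    have hconsc : Continuous (fun p : ℂ × (Fin k → ℂ) => (Fin.cons p.1 p.2 : Fin (k + 1) → ℂ)) := by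
      apply continuous_pi
      intro j
      refine Fin.cases ?_ ?_ j
      · simpa using continuous_fst
      · intro i
        simpa [Function.comp_def] using (continuous_apply i).comp continuous_snd
    have hGc : Continuous (fun p : ℂ × (Fin k → ℂ) => g (Fin.cons p.1 p.2)) :=
      hg.continuous.comp hconsc
    -- integrability on the product set
    have hK : IntegrableOn (fun p : ℂ × (Fin k → ℂ) => g (Fin.cons p.1 p.2))
        (ball (0 : ℂ) r ×ˢ polydisc k r) volume := by
      have hcomp : IsCompact (closedBall (0 : ℂ) r ×ˢ
          Set.pi Set.univ (fun _ : Fin k => closedBall (0 : ℂ) r)) :=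
        (isCompact_closedBall _ _).prod (isCompact_univ_pi fun _ => isCompact_closedBall _ _)
      exact (hGc.continuousOn.integrableOn_compact hcomp).mono_set
        (Set.prod_mono ball_subset_closedBall (polydisc_subset_compact k r))
    -- change of variables
    have hmp0 := (MeasureTheory.measurePreserving_piFinSuccAbove
      (fun _ : Fin (k + 1) => (volume : Measure ℂ)) 0).symm
    rw [show (Measure.pi fun _ : Fin k => (volume : Measure ℂ)) = volume from
        MeasureTheory.volume_pi.symm,
      show (Measure.pi fun _ : Fin (k + 1) => (volume : Measure ℂ)) = volume from
        MeasureTheory.volume_pi.symm,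
      ← MeasureTheory.Measure.volume_eq_prod] at hmp0
    have hchg := hmp0.setIntegral_preimage_emb (MeasurableEquiv.measurableEmbedding _)
      g (polydisc (k + 1) r)
    rw [hpre] at hchg
    have hGid : (fun p : ℂ × (Fin k → ℂ) => g (e.symm p))
        = fun p : ℂ × (Fin k → ℂ) => g (Fin.cons p.1 p.2) :=
      funext fun p => by rw [hsymm_eq p]
    rw [show (fun p : ℂ × (Fin k → ℂ) => g (e.symm p)) = _ from hGid] at hchg
    -- Fubini
    have hfub : ∫ p in ball (0 : ℂ) r ×ˢ polydisc k r, g (Fin.cons p.1 p.2)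
        = ∫ x in ball (0 : ℂ) r, ∫ y in polydisc k r, g (Fin.cons x y) := by
      rw [MeasureTheory.Measure.volume_eq_prod] at hK ⊢
      exact MeasureTheory.setIntegral_prod _ hK
    -- integrability of the inner integral
    have hinner_int : IntegrableOn (fun x => ∫ y in polydisc k r, g (Fin.cons x y))
        (ball (0 : ℂ) r) volume := by
      have hind : Integrable ((ball (0 : ℂ) r ×ˢ polydisc k r).indicator
          (fun p : ℂ × (Fin k → ℂ) => g (Fin.cons p.1 p.2))) (volume.prod volume) := by
        rw [← MeasureTheory.Measure.volume_eq_prod,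
          MeasureTheory.integrable_indicator_iff hmeas_prod]
        exact hK
      have h2 := hind.integral_prod_left
      have h3 : (fun x => ∫ y, (ball (0 : ℂ) r ×ˢ polydisc k r).indicator
            (fun p : ℂ × (Fin k → ℂ) => g (Fin.cons p.1 p.2)) (x, y))
          = (ball (0 : ℂ) r).indicator (fun x => ∫ y in polydisc k r, g (Fin.cons x y)) := by
        funext x
        by_cases hx : x ∈ ball (0 : ℂ) r
        · rw [Set.indicator_of_mem hx, ← MeasureTheory.integral_indicator hmeas_poly]
          congr 1
          funext y
          by_cases hy : y ∈ polydisc k r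
          · have hmem : (x, y) ∈ ball (0 : ℂ) r ×ˢ polydisc k r := ⟨hx, hy⟩
            rw [Set.indicator_of_mem hmem, Set.indicator_of_mem hy]
          · rw [Set.indicator_of_notMem (fun h => hy h.2), Set.indicator_of_notMem hy]
        · rw [Set.indicator_of_notMem hx]
          have h4 : ∀ y, (ball (0 : ℂ) r ×ˢ polydisc k r).indicator
              (fun p : ℂ × (Fin k → ℂ) => g (Fin.cons p.1 p.2)) (x, y) = 0 :=
            fun y => Set.indicator_of_notMem (fun h => hx h.1) _
          simp [h4]
      rw [h3] at h2
      rwa [MeasureTheory.integrable_indicator_iff measurableSet_ball] at h2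
    -- induction hypothesis pointwise
    have hIH : ∀ x : ℂ, (Real.pi * r ^ 2) ^ k * g (Fin.cons x 0)
        ≤ ∫ y in polydisc k r, g (Fin.cons x y) := by
      intro x
      have hgx : ContDiff ℝ 2 (fun y : Fin k → ℂ => g (Fin.cons x y)) :=
        hg.comp (cons_contDiff x)
      have hpshx : SmoothlyPsh k (fun y : Fin k → ℂ => g (Fin.cons x y)) := by
        intro a b w
        have hfe : (fun u : ℂ => g (Fin.cons x (a + u • b)))
            = fun u : ℂ => g ((Fin.cons x a : Fin (k + 1) → ℂ)
                + u • (Fin.cons 0 b : Fin (k + 1) → ℂ)) := by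
          funext u
          rw [cons_add_smul]
        show 0 ≤ lap2 (fun u : ℂ => g (Fin.cons x (a + u • b))) w
        rw [hfe]
        exact hpsh _ _ w
      have := ih (fun y : Fin k → ℂ => g (Fin.cons x y)) hgx hpshx r hr
      simpa using this
    -- the one-dimensional estimate
    have h1d : Real.pi * r ^ 2 * g (Fin.cons 0 0) ≤ ∫ x in ball (0 : ℂ) r, g (Fin.cons x 0) := by
      refine oneDim (hg.comp cons0_contDiff) ?_ hr
      intro w
      have hfe : (fun u : ℂ => g (Fin.cons u 0))
          = fun u : ℂ => g ((0 : Fin (k + 1) → ℂ) + u • (Fin.cons 1 0 : Fin (k + 1) → ℂ)) := by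
        funext u
        rw [cons_smul_e0]
      show 0 ≤ lap2 (fun u : ℂ => g (Fin.cons u 0)) w
      rw [hfe]
      exact hpsh _ _ w
    have hlhs_int : IntegrableOn (fun x : ℂ => (Real.pi * r ^ 2) ^ k * g (Fin.cons x 0))
        (ball (0 : ℂ) r) volume := by
      have hc : Continuous fun x : ℂ => (Real.pi * r ^ 2) ^ k * g (Fin.cons x 0) :=
        continuous_const.mul (hg.continuous.comp cons0_contDiff.continuous)
      exact (hc.continuousOn.integrableOn_compact (isCompact_closedBall _ _)).mono_set
        ball_subset_closedBall
    have hmono : ∫ x in ball (0 : ℂ) r, (Real.pi * r ^ 2) ^ k * g (Fin.cons x 0)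
        ≤ ∫ x in ball (0 : ℂ) r, ∫ y in polydisc k r, g (Fin.cons x y) :=
      MeasureTheory.setIntegral_mono_on hlhs_int hinner_int measurableSet_ball
        fun x _ => hIH x
    calc (Real.pi * r ^ 2) ^ (k + 1) * g 0
        = (Real.pi * r ^ 2) ^ k * (Real.pi * r ^ 2 * g (Fin.cons 0 0)) := by
          rw [cons_zero_zero]; ring
      _ ≤ (Real.pi * r ^ 2) ^ k * ∫ x in ball (0 : ℂ) r, g (Fin.cons x 0) :=
          mul_le_mul_of_nonneg_left h1d (by positivity)
      _ = ∫ x in ball (0 : ℂ) r, (Real.pi * r ^ 2) ^ k * g (Fin.cons x 0) :=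
          (MeasureTheory.integral_const_mul _ _).symm
      _ ≤ ∫ x in ball (0 : ℂ) r, ∫ y in polydisc k r, g (Fin.cons x y) := hmono
      _ = ∫ p in ball (0 : ℂ) r ×ˢ polydisc k r, g (Fin.cons p.1 p.2) := hfub.symm
      _ = ∫ w in polydisc (k + 1) r, g w := hchg

/-- If `τ : ℂⁿ → ℝ` is a nonnegative `C²` smoothly plurisubharmonic function with
`(1/r^{2n}) ∫_{Δ_r} τ dλ → 0` as `r → ∞`, then `τ ≡ 0`. -/
theorem zero_of_psh_slow_growth (n : ℕ) (hn : 1 ≤ n) (τ : (Fin n → ℂ) → ℝ)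
    (hC2 : ContDiff ℝ 2 τ) (hnonneg : ∀ z, 0 ≤ τ z) (hpsh : SmoothlyPsh n τ)
    (hlim : Tendsto (fun r : ℝ => (1 / r ^ (2 * n)) * ∫ z in polydisc n r, τ z)
      atTop (nhds 0)) :
    ∀ z, τ z = 0 := by
  intro z
  set c : ℝ := ‖z‖ + 1 with hc
  have hc1 : 1 ≤ c := le_add_of_nonneg_left (norm_nonneg z)
  have hmain : ∀ r : ℝ, 0 < r →
      Real.pi ^ n * r ^ (2 * n) * τ z ≤ ∫ u in polydisc n (r + c), τ u := by
    intro r hr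
    have hgz : ContDiff ℝ 2 (fun w : Fin n → ℂ => τ (z + w)) :=
      hC2.comp (contDiff_const.add contDiff_id)
    have hpshz : SmoothlyPsh n (fun w => τ (z + w)) := by
      intro a b w
      have hfe : (fun u : ℂ => τ (z + (a + u • b))) = fun u : ℂ => τ (z + a + u • b) := by
        funext u
        rw [add_assoc]
      show 0 ≤ lap2 (fun u : ℂ => τ (z + (a + u • b))) w
      rw [hfe]
      exact hpsh _ _ w
    have h1 := psh_key n (fun w => τ (z + w)) hgz hpshz r hr
    -- translate the integral
    have hmp : MeasureTheory.MeasurePreserving (fun w : Fin n → ℂ => z + w) volume volume :=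
      MeasureTheory.measurePreserving_add_left volume z
    have hchg := hmp.setIntegral_preimage_emb (measurableEmbedding_addLeft z)
      τ (polydisc n (r + c))
    -- monotonicity of the set integral
    have hsub : polydisc n r ⊆ (fun w : Fin n → ℂ => z + w) ⁻¹' polydisc n (r + c) := by
      intro w hw j
      have h2 : ‖z j + w j‖ ≤ ‖z j‖ + ‖w j‖ :=
        norm_add_le _ _
      have h3 : ‖z j‖ ≤ ‖z‖ := by
        exact norm_le_pi_norm z j
      have h4 : ‖w j‖ < r := hw j
      show ‖(z + w) j‖ < r + c
      simp only [Pi.add_apply]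
      calc ‖z j + w j‖ ≤ ‖z j‖ + ‖w j‖ := h2
        _ < ‖z‖ + 1 + r := by linarith
        _ = r + c := by rw [hc]; ring
    have hpre_int : IntegrableOn (fun w : Fin n → ℂ => τ (z + w))
        ((fun w : Fin n → ℂ => z + w) ⁻¹' polydisc n (r + c)) volume := by
      have hbig : (fun w : Fin n → ℂ => z + w) ⁻¹' polydisc n (r + c)
          ⊆ Set.pi Set.univ (fun _ : Fin n => closedBall (0 : ℂ) (r + c + ‖z‖)) := by
        intro w hw
        rw [Set.mem_univ_pi]
        intro j
        have h5 : ‖z j + w j‖ < r + c := hw j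
        have h3 : ‖z j‖ ≤ ‖z‖ := by
          exact norm_le_pi_norm z j
        have h6 : ‖w j‖ ≤ ‖z j + w j‖ + ‖z j‖ := by
          have h8 : ‖w j‖ ≤ ‖z j + w j‖ + ‖z j‖ := by
            have h9 : w j = z j + w j - z j := by ring
            calc ‖w j‖ = ‖z j + w j - z j‖ := by rw [← h9]
              _ ≤ ‖z j + w j‖ + ‖z j‖ := norm_sub_le _ _
          simpa using h8
        rw [mem_closedBall_zero_iff]
        linarith
      exact ((hgz.continuous.continuousOn.integrableOn_compact
        (isCompact_univ_pi fun _ => isCompact_closedBall _ _)).mono_set hbig)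
    have hmono : ∫ w in polydisc n r, τ (z + w)
        ≤ ∫ w in (fun w : Fin n → ℂ => z + w) ⁻¹' polydisc n (r + c), τ (z + w) :=
      MeasureTheory.setIntegral_mono_set hpre_int
        (Filter.Eventually.of_forall fun w => hnonneg _)
        (HasSubset.Subset.eventuallyLE hsub)
    have h7 : (Real.pi * r ^ 2) ^ n = Real.pi ^ n * r ^ (2 * n) := by
      rw [mul_pow, pow_mul]
    have h8 : (fun w : Fin n → ℂ => τ (z + w)) 0 = τ z := by simp
    calc Real.pi ^ n * r ^ (2 * n) * τ z
        = (Real.pi * r ^ 2) ^ n * (fun w : Fin n → ℂ => τ (z + w)) 0 := by rw [h7, h8]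
      _ ≤ ∫ w in polydisc n r, τ (z + w) := h1
      _ ≤ ∫ w in (fun w : Fin n → ℂ => z + w) ⁻¹' polydisc n (r + c), τ (z + w) := hmono
      _ = ∫ u in polydisc n (r + c), τ u := hchg
  -- pass to the limit
  have hpi : (0 : ℝ) < Real.pi ^ n := pow_pos Real.pi_pos n
  have hbound : ∀ r : ℝ, 0 < r → τ z ≤ ((r + c) / r) ^ (2 * n) / Real.pi ^ n
      * ((1 / (r + c) ^ (2 * n)) * ∫ u in polydisc n (r + c), τ u) := by
    intro r hr
    have hrc : (0 : ℝ) < r + c := by linarith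
    have h1 := hmain r hr
    have hrn : (0 : ℝ) < r ^ (2 * n) := pow_pos hr _
    have hrcn : (0 : ℝ) < (r + c) ^ (2 * n) := pow_pos hrc _
    rw [div_pow]
    rw [div_div, div_mul_eq_mul_div, le_div_iff₀ (by positivity)]
    calc τ z * (r ^ (2 * n) * Real.pi ^ n)
        = Real.pi ^ n * r ^ (2 * n) * τ z := by ring
      _ ≤ ∫ u in polydisc n (r + c), τ u := h1
      _ = (r + c) ^ (2 * n) * ((1 / (r + c) ^ (2 * n)) * ∫ u in polydisc n (r + c), τ u) := by
          field_simp
  have htend : Tendsto (fun r : ℝ => ((r + c) / r) ^ (2 * n) / Real.pi ^ n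
      * ((1 / (r + c) ^ (2 * n)) * ∫ u in polydisc n (r + c), τ u)) atTop (nhds 0) := by
    have ht1 : Tendsto (fun r : ℝ => (r + c) / r) atTop (nhds 1) := by
      have h2 : (fun r : ℝ => (r + c) / r) =ᶠ[atTop] fun r => 1 + c * r⁻¹ := by
        filter_upwards [eventually_gt_atTop (0 : ℝ)] with r hr
        field_simp
      have h3 : Tendsto (fun r : ℝ => 1 + c * r⁻¹) atTop (nhds 1) := by
        have := (tendsto_inv_atTop_zero (𝕜 := ℝ)).const_mul c
        simpa using tendsto_const_nhds.add this
      exact Tendsto.congr' h2.symm h3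
    have ht2 : Tendsto (fun r : ℝ => ((r + c) / r) ^ (2 * n) / Real.pi ^ n) atTop
        (nhds (1 / Real.pi ^ n)) := by
      have := (ht1.pow (2 * n)).div_const (Real.pi ^ n)
      simpa using this
    have ht3 : Tendsto (fun r : ℝ => (1 / (r + c) ^ (2 * n)) * ∫ u in polydisc n (r + c), τ u)
        atTop (nhds 0) :=
      hlim.comp (tendsto_atTop_add_const_right atTop c tendsto_id)
    have := ht2.mul ht3
    simpa using this
  have hτz : τ z ≤ 0 := by
    refine ge_of_tendsto htend ?_
    filter_upwards [eventually_gt_atTop (0 : ℝ)] with r hr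
    exact hbound r hr
  exact le_antisymm hτz (hnonneg z)
end

section
/- Let n ≥ 1, r > 0 and c > 0. Let v be a real-valued function that is C² and strictly positive on an open neighborhood of the closed ball of radius r centered at 0 in ℂⁿ, and suppose that Δ(log v)(z) ≥ c · v(z) for every z in the open ball of radius r centered at 0. Then v(0) ≤ 8(n+1) / (c · r²). -/
open Filter Set Metric

variable {E : Type*} [NormedAddCommGroup E] [NormedSpace ℝ E]

lemma line_hasDerivAt (F : E → ℝ) {U : Set E} (hU : IsOpen U) (hF : ContDiffOn ℝ 2 F U)
    (z a : E) {t : ℝ} (ht : z + t • a ∈ U) :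
    HasDerivAt (fun s => F (z + s • a)) ((fderiv ℝ F (z + t • a)) a) t := by
  have hL : HasDerivAt (fun s : ℝ => z + s • a) a t := by
    simpa using ((hasDerivAt_id t).smul_const a).const_add z
  have hFd : DifferentiableAt ℝ F (z + t • a) :=
    (hF.contDiffAt (hU.mem_nhds ht)).differentiableAt (by norm_num)
  exact hFd.hasFDerivAt.comp_hasDerivAt t hL

lemma line_deriv2 (F : E → ℝ) {U : Set E} (hU : IsOpen U) (hF : ContDiffOn ℝ 2 F U)
    {z : E} (hz : z ∈ U) (a : E) :
    HasDerivAt (fun t : ℝ => (fderiv ℝ F (z + t • a)) a)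
      (iteratedFDeriv ℝ 2 F z ![a, a]) 0 := by
  have h1 : ContDiffOn ℝ 1 (fderiv ℝ F) U := hF.fderiv_of_isOpen hU (by norm_num)
  have hFd : DifferentiableAt ℝ (fderiv ℝ F) z :=
    (h1.contDiffAt (hU.mem_nhds hz)).differentiableAt (by norm_num)
  have hL : HasDerivAt (fun s : ℝ => z + s • a) a 0 := by
    simpa using ((hasDerivAt_id (0:ℝ)).smul_const a).const_add z
  have h2 : HasDerivAt (fun t : ℝ => fderiv ℝ F (z + t • a))
      (fderiv ℝ (fderiv ℝ F) z a) 0 := by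
    have hz0 : z + (0:ℝ) • a = z := by simp
    have hFd' : HasFDerivAt (fderiv ℝ F) (fderiv ℝ (fderiv ℝ F) z) (z + (0:ℝ) • a) := by
      rw [hz0]; exact hFd.hasFDerivAt
    exact hFd'.comp_hasDerivAt 0 hL
  have h3 := h2.clm_apply (hasDerivAt_const (0:ℝ) a)
  rw [iteratedFDeriv_two_apply]
  simpa using h3

lemma snd_deriv_nonpos_of_isLocalMax {h h1 : ℝ → ℝ} {d : ℝ}
    (hmax : IsLocalMax h 0)
    (hd : ∀ᶠ t in nhds (0:ℝ), HasDerivAt h (h1 t) t)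
    (hd2 : HasDerivAt h1 d 0) : d ≤ 0 := by
  by_contra hpos
  push_neg at hpos
  have h10 : h1 0 = 0 := by
    have h0 := hmax.deriv_eq_zero
    rwa [hd.self_of_nhds.deriv] at h0
  have hslope := hasDerivAt_iff_tendsto_slope.mp hd2
  have hev : ∀ᶠ t in nhdsWithin (0:ℝ) (Set.Ioi 0), 0 < h1 t := by
    have h1' : ∀ᶠ t in nhdsWithin (0:ℝ) {0}ᶜ, 0 < slope h1 0 t :=
      hslope.eventually (eventually_gt_nhds hpos)
    have h2' : ∀ᶠ t in nhdsWithin (0:ℝ) (Set.Ioi 0), 0 < slope h1 0 t :=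
      h1'.filter_mono (nhdsWithin_mono 0 (by intro x hx; exact ne_of_gt hx))
    filter_upwards [h2', self_mem_nhdsWithin] with t ht ht0
    have : slope h1 0 t = h1 t / t := by
      simp [slope_def_field, h10]
    rw [this] at ht
    have := mul_pos ht (show (0:ℝ) < t from ht0)
    rwa [div_mul_cancel₀] at this
    exact ne_of_gt ht0
  rcases mem_nhdsGT_iff_exists_Ioo_subset.mp hev with ⟨ε, hε, hsub⟩
  simp only [mem_Ioi] at hε
  rcases Metric.eventually_nhds_iff.mp (hd.and hmax) with ⟨δ, hδ, hδall⟩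
  set ε' := min ε δ / 2 with hε'
  have hε'pos : 0 < ε' := by positivity
  have hε'lt : ε' < min ε δ := by
    have : 0 < min ε δ := lt_min hε hδ
    linarith [half_lt_self this]
  -- h is strictly monotone on [0, ε']
  have hderiv : ∀ t ∈ interior (Icc (0:ℝ) ε'), 0 < deriv h t := by
    intro t ht
    rw [interior_Icc] at ht
    have htd : dist t 0 < δ := by
      rw [Real.dist_eq, sub_zero, abs_of_pos ht.1]
      exact ht.2.trans (hε'lt.trans_le (min_le_right _ _))
    have hder := (hδall htd).1
    rw [hder.deriv]
    exact hsub ⟨ht.1, ht.2.trans (hε'lt.trans_le (min_le_left _ _))⟩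
  have hcont : ContinuousOn h (Icc (0:ℝ) ε') := by
    intro t ht
    have htd : dist t 0 < δ := by
      rw [Real.dist_eq, sub_zero, abs_of_nonneg ht.1]
      exact ht.2.trans_lt (hε'lt.trans_le (min_le_right _ _))
    exact ((hδall htd).1.continuousAt).continuousWithinAt
  have hmono := strictMonoOn_of_deriv_pos (convex_Icc (0:ℝ) ε') hcont hderiv
  have hlt : h 0 < h ε' := hmono (left_mem_Icc.2 hε'pos.le) (right_mem_Icc.2 hε'pos.le) hε'pos
  have : h ε' ≤ h 0 := by
    have htd : dist ε' 0 < δ := by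
      rw [Real.dist_eq, sub_zero, abs_of_pos hε'pos]
      exact hε'lt.trans_le (min_le_right _ _)
    exact (hδall htd).2
  linarith

lemma key_dir {E : Type*} [NormedAddCommGroup E] [InnerProductSpace ℂ E]
    (r : ℝ) (hr : 0 < r) (v : E → ℝ) (U : Set E) (hU : IsOpen U)
    (hB : Metric.closedBall (0:E) r ⊆ U)
    (hv : ContDiffOn ℝ 2 v U) (hpos : ∀ z ∈ U, 0 < v z)
    (z₀ : E) (hz₀ : ‖z₀‖ < r)
    (hmax : IsMaxOn (fun w => (r^2 - ‖w‖^2)^2 * v w) (Metric.closedBall (0:E) r) z₀)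
    (a : E) (ha : ‖a‖ = 1) :
    iteratedFDeriv ℝ 2 (fun w => Real.log (v w)) z₀ ![a, a]
      ≤ (4*(r^2 - ‖z₀‖^2) + 8*(Complex.re (inner ℂ z₀ a : ℂ))^2) / (r^2 - ‖z₀‖^2)^2 := by
  set p : ℝ := Complex.re (inner ℂ z₀ a : ℂ) with hp
  set A : ℝ := r^2 - ‖z₀‖^2 with hAdef
  have hA : 0 < A := by
    have h1 : ‖z₀‖^2 < r^2 := by nlinarith [norm_nonneg z₀]
    simp [hAdef]; linarith
  set q : ℝ → ℝ := fun t => A - 2*p*t - t^2 with hqdef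
  -- norm identity
  have hnorm : ∀ t : ℝ, r^2 - ‖z₀ + t • a‖^2 = q t := by
    intro t
    have h1 : ‖z₀ + t • a‖^2 = ‖z₀‖^2 + 2 * Complex.re (inner ℂ z₀ (t • a) : ℂ) + ‖t • a‖^2 := by
      have := norm_add_sq (𝕜 := ℂ) z₀ (t • a); simp only [RCLike.re_to_complex] at this; exact this
    have h2 : (inner ℂ z₀ (t • a) : ℂ) = (t:ℂ) * (inner ℂ z₀ a : ℂ) := by
      rw [show (t:ℝ) • a = ((t:ℂ)) • a from (Complex.coe_smul t a).symm, inner_smul_right]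
    have h3 : ‖t • a‖^2 = t^2 := by
      rw [norm_smul, ha, mul_one, Real.norm_eq_abs, sq_abs]
    rw [h1, h2, h3, hqdef]
    simp [Complex.mul_re]
    ring
  have hz₀U : z₀ ∈ U := hB (by simpa using hz₀.le)
  -- F = log ∘ v
  set F : E → ℝ := fun w => Real.log (v w) with hFdef
  have hF : ContDiffOn ℝ 2 F U := hv.log (fun x hx => (hpos x hx).ne')
  set D : ℝ := iteratedFDeriv ℝ 2 F z₀ ![a, a] with hD
  set ψ₁ : ℝ → ℝ := fun t => (fderiv ℝ F (z₀ + t • a)) a with hψ₁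
  have hψD : HasDerivAt ψ₁ D 0 := line_deriv2 F hU hF hz₀U a
  -- φ part
  set φ₁ : ℝ → ℝ := fun t => (-(2*p) - 2*t) / q t with hφ₁
  have hq' : ∀ t : ℝ, HasDerivAt q (-(2*p) - 2*t) t := by
    intro t
    have h1 : HasDerivAt q (0 - 2*p*1 - (2:ℕ)*t^1) t :=
      (((hasDerivAt_const t A).sub ((hasDerivAt_id t).const_mul (2*p)))).sub (hasDerivAt_pow 2 t)
    convert h1 using 1
    push_cast; ring
  have hφ1d : HasDerivAt φ₁ ((-2*A - 4*p^2)/A^2) 0 := by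
    have hnum : HasDerivAt (fun t : ℝ => -(2*p) - 2*t) (-2) 0 := by
      simpa using ((hasDerivAt_id (0:ℝ)).const_mul 2).const_sub (-(2*p))
    have hq0 : q 0 = A := by simp [hqdef]
    have := hnum.div (hq' 0) (by rw [hq0]; exact hA.ne')
    refine this.congr_deriv ?_
    rw [hq0]
    field_simp
    ring
  -- assemble
  set ψ : ℝ → ℝ := fun t => F (z₀ + t • a) with hψdef
  set h : ℝ → ℝ := fun t => 2 * Real.log (q t) + ψ t with hhdef
  set h1 : ℝ → ℝ := fun t => 2 * φ₁ t + ψ₁ t with hh1def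
  have hq0 : q 0 = A := by simp [hqdef]
  have hmem : ∀ᶠ t in nhds (0:ℝ), ‖z₀ + t • a‖ < r := by
    have hc : Continuous fun t : ℝ => ‖z₀ + t • a‖ :=
      (continuous_const.add (continuous_id.smul continuous_const)).norm
    have := (isOpen_lt hc continuous_const).eventually_mem
      (show ‖z₀ + (0:ℝ) • a‖ < r by simpa using hz₀)
    simpa using this
  have hqpos : ∀ t : ℝ, ‖z₀ + t • a‖ < r → 0 < q t := by
    intro t ht
    rw [← hnorm t]
    nlinarith [norm_nonneg (z₀ + t • a)]
  have hderivs : ∀ᶠ t in nhds (0:ℝ), HasDerivAt h (h1 t) t := by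
    filter_upwards [hmem] with t ht
    have hU' : z₀ + t • a ∈ U := hB (by simpa [Metric.mem_closedBall, dist_eq_norm] using ht.le)
    have hφ : HasDerivAt (fun t => Real.log (q t)) (φ₁ t) t := (hq' t).log (hqpos t ht).ne'
    have hψ : HasDerivAt ψ (ψ₁ t) t := line_hasDerivAt F hU hF z₀ a hU'
    exact (hφ.const_mul 2).add hψ
  have hlog : ∀ t : ℝ, ‖z₀ + t • a‖ < r →
      h t = Real.log ((q t)^2 * v (z₀ + t • a)) := by
    intro t ht
    have hU' : z₀ + t • a ∈ U := hB (by simpa [Metric.mem_closedBall, dist_eq_norm] using ht.le)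
    have hvw : 0 < v (z₀ + t • a) := hpos _ hU'
    rw [Real.log_mul (pow_ne_zero _ (hqpos t ht).ne') hvw.ne', Real.log_pow]
    simp [hhdef, hψdef, hFdef]
  have hlocmax : IsLocalMax h 0 := by
    filter_upwards [hmem] with t ht
    have ht0 : ‖z₀ + (0:ℝ) • a‖ < r := by simpa using hz₀
    have hwB : z₀ + t • a ∈ Metric.closedBall (0:E) r := by
      simpa [Metric.mem_closedBall, dist_eq_norm] using ht.le
    have hU' : z₀ + t • a ∈ U := hB hwB
    have hvw : 0 < v (z₀ + t • a) := hpos _ hU'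
    have hτ := hmax hwB
    simp only [Set.mem_setOf_eq] at hτ
    rw [hlog t ht, hlog 0 ht0]
    apply Real.log_le_log (mul_pos (pow_pos (hqpos t ht) 2) hvw)
    have e1 : r^2 - ‖z₀ + t • a‖^2 = q t := hnorm t
    have e2 : r^2 - ‖z₀‖^2 = q 0 := by rw [hq0]
    have e0 : z₀ + (0:ℝ) • a = z₀ := by simp
    rw [e0]
    calc (q t)^2 * v (z₀ + t • a) = (r^2 - ‖z₀ + t • a‖^2)^2 * v (z₀ + t • a) := by rw [e1]
      _ ≤ (r^2 - ‖z₀‖^2)^2 * v z₀ := hτ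
      _ = (q 0)^2 * v z₀ := by rw [e2]
  have hfinal : 2 * ((-2*A - 4*p^2)/A^2) + D ≤ 0 :=
    snd_deriv_nonpos_of_isLocalMax hlocmax hderivs ((hφ1d.const_mul 2).add hψD)
  have heq : (4*A + 8*p^2)/A^2 = -(2 * ((-2*A - 4*p^2)/A^2)) := by
    field_simp
    ring
  rw [heq]
  linarith


open MeasureTheory

/-- The Laplacian of `f : ℂⁿ → ℝ` at `z`, where `ℂⁿ` is regarded as a `2n`-dimensional real
inner product space with the orthonormal basis `{e_j, i·e_j}`: the sum of the second
derivatives of `f` along the directions of this basis. -/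
noncomputable def lapE (n : ℕ) (f : EuclideanSpace ℂ (Fin n) → ℝ)
    (z : EuclideanSpace ℂ (Fin n)) : ℝ :=
  ∑ j : Fin n,
    (iteratedFDeriv ℝ 2 f z
        ![EuclideanSpace.single j (1 : ℂ), EuclideanSpace.single j (1 : ℂ)] +
      iteratedFDeriv ℝ 2 f z
        ![EuclideanSpace.single j Complex.I, EuclideanSpace.single j Complex.I])

/-- Ahlfors–Schwarz-type lemma: if `v` is `C²` and positive on a neighborhood of the closed
ball of radius `r`, and `Δ(log v) ≥ c·v` on the open ball of radius `r`, then
`v(0) ≤ 8(n+1)/(c r²)`. -/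
theorem ahlfors_schwarz (n : ℕ) (hn : 1 ≤ n) (r c : ℝ) (hr : 0 < r) (hc : 0 < c)
    (v : EuclideanSpace ℂ (Fin n) → ℝ) (U : Set (EuclideanSpace ℂ (Fin n)))
    (hU : IsOpen U) (hball : Metric.closedBall (0 : EuclideanSpace ℂ (Fin n)) r ⊆ U)
    (hv : ContDiffOn ℝ 2 v U) (hpos : ∀ z ∈ U, 0 < v z)
    (hineq : ∀ z ∈ Metric.ball (0 : EuclideanSpace ℂ (Fin n)) r,
      c * v z ≤ lapE n (fun w => Real.log (v w)) z) :
    v 0 ≤ 8 * (n + 1) / (c * r ^ 2) := by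
  classical
  set τ : EuclideanSpace ℂ (Fin n) → ℝ := fun w => (r^2 - ‖w‖^2)^2 * v w with hτ
  have hBc : IsCompact (Metric.closedBall (0 : EuclideanSpace ℂ (Fin n)) r) :=
    isCompact_closedBall _ _
  have hcont : ContinuousOn τ (Metric.closedBall 0 r) :=
    (((continuous_const.sub (continuous_norm.pow 2)).pow 2).continuousOn).mul
      ((hv.continuousOn).mono hball)
  obtain ⟨z₀, hz₀B, hmax⟩ := hBc.exists_isMaxOn
    ⟨0, Metric.mem_closedBall_self hr.le⟩ hcont
  have h0B : (0 : EuclideanSpace ℂ (Fin n)) ∈ Metric.closedBall (0:_) r :=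
    Metric.mem_closedBall_self hr.le
  have hv0 : 0 < v 0 := hpos 0 (hball h0B)
  have hτ0 : τ 0 = r^4 * v 0 := by
    simp only [hτ, norm_zero]
    ring
  have hτ0z : τ 0 ≤ τ z₀ := hmax h0B
  have hz₀le : ‖z₀‖ ≤ r := by
    simpa [Metric.mem_closedBall, dist_eq_norm] using hz₀B
  have hz₀lt : ‖z₀‖ < r := by
    rcases lt_or_eq_of_le hz₀le with h | h
    · exact h
    · exfalso
      have hτz : τ z₀ = 0 := by simp [hτ, h]
      nlinarith [mul_pos (pow_pos hr 4) hv0]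
  have hz₀U : z₀ ∈ U := hball hz₀B
  set A : ℝ := r^2 - ‖z₀‖^2 with hA
  have hApos : 0 < A := by nlinarith [norm_nonneg z₀]
  have hAle : A ≤ r^2 := by nlinarith [norm_nonneg z₀]
  have hkey : ∀ a : EuclideanSpace ℂ (Fin n), ‖a‖ = 1 →
      iteratedFDeriv ℝ 2 (fun w => Real.log (v w)) z₀ ![a, a] ≤
        (4*A + 8*(Complex.re (inner ℂ z₀ a : ℂ))^2)/A^2 :=
    fun a ha => key_dir r hr v U hU hball hv hpos z₀ hz₀lt hmax a ha
  have hlapb : lapE n (fun w => Real.log (v w)) z₀ ≤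
      ∑ j : Fin n, ((8*A + 8*‖z₀ j‖^2)/A^2) := by
    unfold lapE
    apply Finset.sum_le_sum
    intro j _
    have h1 := hkey (EuclideanSpace.single j (1:ℂ)) (by simp)
    have h2 := hkey (EuclideanSpace.single j Complex.I) (by simp)
    have e1 : Complex.re (inner ℂ z₀ (EuclideanSpace.single j (1:ℂ)) : ℂ) = (z₀ j).re := by
      rw [EuclideanSpace.inner_single_right]
      simp
    have e2 : Complex.re (inner ℂ z₀ (EuclideanSpace.single j Complex.I) : ℂ) = (z₀ j).im := by
      rw [EuclideanSpace.inner_single_right]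
      simp [Complex.mul_re]
    have e3 : ‖z₀ j‖^2 = (z₀ j).re^2 + (z₀ j).im^2 := by
      rw [Complex.sq_norm, Complex.normSq_apply]
      ring
    calc iteratedFDeriv ℝ 2 (fun w => Real.log (v w)) z₀
          ![EuclideanSpace.single j (1:ℂ), EuclideanSpace.single j (1:ℂ)] +
        iteratedFDeriv ℝ 2 (fun w => Real.log (v w)) z₀
          ![EuclideanSpace.single j Complex.I, EuclideanSpace.single j Complex.I]
        ≤ (4*A + 8*(Complex.re (inner ℂ z₀ (EuclideanSpace.single j (1:ℂ)) : ℂ))^2)/A^2 +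
          (4*A + 8*(Complex.re (inner ℂ z₀ (EuclideanSpace.single j Complex.I) : ℂ))^2)/A^2 :=
        add_le_add h1 h2
      _ = (8*A + 8*‖z₀ j‖^2)/A^2 := by
        rw [e1, e2, e3, ← add_div]
        ring_nf
  have hsum2 : ∑ j : Fin n, ((8*A + 8*‖z₀ j‖^2)/A^2) = (8*n*A + 8*‖z₀‖^2)/A^2 := by
    rw [← Finset.sum_div]
    congr 1
    rw [Finset.sum_add_distrib, Finset.sum_const, Finset.card_univ, Fintype.card_fin]
    have hnz : ‖z₀‖^2 = ∑ j : Fin n, ‖z₀ j‖^2 := by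
      rw [EuclideanSpace.norm_eq, Real.sq_sqrt (by positivity)]
    rw [← Finset.mul_sum, ← hnz]
    push_cast
    ring
  have hball0 : z₀ ∈ Metric.ball (0 : EuclideanSpace ℂ (Fin n)) r := by
    simpa [Metric.mem_ball, dist_eq_norm] using hz₀lt
  have hcv : c * v z₀ ≤ (8*n*A + 8*‖z₀‖^2)/A^2 :=
    (hineq z₀ hball0).trans (hlapb.trans_eq hsum2)
  have hn1 : (1:ℝ) ≤ (n:ℝ) := by exact_mod_cast hn
  have hnum : 8*(n:ℝ)*A + 8*‖z₀‖^2 ≤ 8*((n:ℝ)+1)*r^2 := by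
    nlinarith [norm_nonneg z₀]
  rw [le_div_iff₀ (pow_pos hApos 2)] at hcv
  have hcv2 : c * v z₀ * A^2 ≤ 8*((n:ℝ)+1)*r^2 := hcv.trans hnum
  have hτz₀ : τ z₀ = A^2 * v z₀ := by simp [hτ, hA]
  have hvz₀ : 0 < v z₀ := hpos z₀ hz₀U
  have hchain : r^4 * v 0 ≤ A^2 * v z₀ := by rw [← hτ0, ← hτz₀]; exact hτ0z
  rw [le_div_iff₀ (by positivity)]
  have h5 : c * v 0 * r^4 ≤ 8*((n:ℝ)+1)*r^2 := by
    nlinarith [mul_le_mul_of_nonneg_left hchain hc.le]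
  have h6 : (v 0 * (c * r ^ 2)) * r^2 ≤ (8 * ((n:ℝ) + 1)) * r^2 := by nlinarith
  exact (mul_le_mul_iff_left₀ (pow_pos hr 2)).mp h6
end

section
/- Let n ≥ 1 and c > 0. There is no function v : ℂⁿ → ℝ that is C², strictly positive everywhere, and satisfies Δ(log v)(z) ≥ c · v(z) for every z ∈ ℂⁿ. -/
open MeasureTheory

section Aux
open Filter

lemma aux_secondDeriv_nonpos {g : ℝ → ℝ} {d : ℝ}
    (hdiff : ∀ᶠ t in nhds (0:ℝ), DifferentiableAt ℝ g t)
    (hdd : HasDerivAt (deriv g) d 0) (hmax : IsLocalMax g 0) : d ≤ 0 := by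
  by_contra hpos
  push_neg at hpos
  have h0 : deriv g 0 = 0 := hmax.deriv_eq_zero
  have hslope : Tendsto (slope (deriv g) 0) (nhdsWithin 0 {(0:ℝ)}ᶜ) (nhds d) :=
    hasDerivAt_iff_tendsto_slope.mp hdd
  have hev : ∀ᶠ t in nhdsWithin (0:ℝ) {(0:ℝ)}ᶜ, 0 < slope (deriv g) 0 t :=
    hslope.eventually (eventually_gt_nhds hpos)
  have hev' : ∀ᶠ t in nhds (0:ℝ), t ≠ 0 → 0 < slope (deriv g) 0 t := by
    rw [eventually_nhdsWithin_iff] at hev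
    filter_upwards [hev] with t ht h using ht h
  have hall : ∀ᶠ t in nhds (0:ℝ),
      (t ≠ 0 → 0 < slope (deriv g) 0 t) ∧ DifferentiableAt ℝ g t ∧ g t ≤ g 0 :=
    hev'.and (hdiff.and hmax)
  obtain ⟨δ, hδpos, hδ⟩ := Metric.eventually_nhds_iff.mp hall
  set t0 := δ/2 with ht0def
  have ht0 : 0 < t0 := by positivity
  have hmem : ∀ t ∈ Set.Icc (0:ℝ) t0, dist t 0 < δ := by
    intro t ht
    rw [Real.dist_eq, sub_zero, abs_of_nonneg ht.1]
    have := ht.2; simp only [ht0def] at this ⊢; linarith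
  have hmono : StrictMonoOn g (Set.Icc 0 t0) := by
    apply strictMonoOn_of_deriv_pos (convex_Icc _ _)
    · intro t ht
      exact ((hδ (hmem t ht)).2.1).continuousAt.continuousWithinAt
    · intro t ht
      rw [interior_Icc] at ht
      have h1 := (hδ (hmem t ⟨ht.1.le, ht.2.le⟩)).1 (ne_of_gt ht.1)
      rw [slope_def_field, h0, sub_zero, sub_zero] at h1
      rcases div_pos_iff.mp h1 with ⟨h, _⟩ | ⟨_, h⟩
      · exact h
      · linarith [ht.1]
  have hlt : g 0 < g t0 := hmono ⟨le_rfl, ht0.le⟩ ⟨ht0.le, le_rfl⟩ ht0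
  have hle : g t0 ≤ g 0 := (hδ (hmem t0 ⟨ht0.le, le_rfl⟩)).2.2
  linarith

lemma aux_line {E : Type*} [NormedAddCommGroup E] [NormedSpace ℝ E]
    {u : E → ℝ} (hu : ContDiff ℝ 2 u) (x e : E) :
    (∀ t : ℝ, HasDerivAt (fun s : ℝ => u (x + s • e)) (fderiv ℝ u (x + t • e) e) t) ∧
    HasDerivAt (fun t : ℝ => fderiv ℝ u (x + t • e) e)
      (iteratedFDeriv ℝ 2 u x ![e, e]) 0 := by
  have hline : ∀ t : ℝ, HasDerivAt (fun s : ℝ => x + s • e) e t := by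
    intro t
    simpa using ((hasDerivAt_id t).smul_const e).const_add x
  have hud : Differentiable ℝ u := hu.differentiable (by norm_num)
  refine ⟨fun t => (hud (x + t • e)).hasFDerivAt.comp_hasDerivAt t (hline t), ?_⟩
  have hF : ContDiff ℝ 1 (fderiv ℝ u) := hu.fderiv_right (by norm_num)
  have hFd : HasFDerivAt (fderiv ℝ u) (fderiv ℝ (fderiv ℝ u) x) (x + (0:ℝ) • e) := by
    simpa using (hF.differentiable (by norm_num) (x + (0:ℝ) • e)).hasFDerivAt
  have h2 : HasDerivAt (fun t : ℝ => fderiv ℝ u (x + t • e))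
      (fderiv ℝ (fderiv ℝ u) x e) 0 := hFd.comp_hasDerivAt 0 (hline 0)
  have h3 := h2.clm_apply (hasDerivAt_const (0:ℝ) e)
  rw [iteratedFDeriv_two_apply]
  simpa using h3

lemma aux_dir {E : Type*} [NormedAddCommGroup E] [InnerProductSpace ℂ E]
    {u : E → ℝ} (hu : ContDiff ℝ 2 u) (x₀ e : E) (he : ‖e‖ = 1)
    (R CC : ℝ) (hs₀ : 0 < R^2 - ‖x₀‖^2)
    (hmax : IsLocalMax
      (fun t : ℝ => u (x₀ + t • e) - (CC - 2 * Real.log (R^2 - ‖x₀ + t • e‖^2))) 0) :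
    iteratedFDeriv ℝ 2 u x₀ ![e, e] ≤ 12 * R^2 / (R^2 - ‖x₀‖^2)^2 := by
  set a : ℝ := (inner ℂ x₀ e).re with ha
  set s₀ : ℝ := R^2 - ‖x₀‖^2 with hs₀def
  -- norm expansion along the line
  have hnorm : ∀ t : ℝ, ‖x₀ + t • e‖^2 = ‖x₀‖^2 + 2*a*t + t^2 := by
    intro t
    have h1 := norm_add_sq (𝕜 := ℂ) x₀ (t • e)
    have h2 : (inner ℂ x₀ (t • e)) = t • (inner ℂ x₀ e) := by
      rw [RCLike.real_smul_eq_coe_smul (K := ℂ) t e, inner_smul_real_right]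
    rw [h1, h2]
    have h3 : ‖t • e‖ = |t| := by rw [norm_smul, he, Real.norm_eq_abs, mul_one]
    rw [h3, sq_abs]
    simp [Complex.real_smul]
    ring
  have hp : ∀ t : ℝ, R^2 - ‖x₀ + t • e‖^2 = s₀ - 2*a*t - t^2 := by
    intro t; rw [hnorm t]; ring
  -- line function equals explicit formula
  have hgrw : (fun t : ℝ => u (x₀ + t • e) - (CC - 2 * Real.log (R^2 - ‖x₀ + t • e‖^2)))
      = fun t : ℝ => u (x₀ + t • e) - (CC - 2 * Real.log (s₀ - 2*a*t - t^2)) := by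
    funext t; rw [hp t]
  rw [hgrw] at hmax
  set g : ℝ → ℝ := fun t : ℝ => u (x₀ + t • e) - (CC - 2 * Real.log (s₀ - 2*a*t - t^2))
    with hg
  obtain ⟨hgu, hgu2⟩ := aux_line hu x₀ e
  -- derivative of the quadratic
  have hq : ∀ t : ℝ, HasDerivAt (fun t : ℝ => s₀ - 2*a*t - t^2) (-(2*a) - 2*t) t := by
    intro t
    have h1 : HasDerivAt (fun t : ℝ => 2*a*t) (2*a) t := by
      simpa using (hasDerivAt_id t).const_mul (2*a)
    have h2 : HasDerivAt (fun t : ℝ => t^2) (2*t) t := by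
      simpa using hasDerivAt_pow 2 t
    have := ((hasDerivAt_const t s₀).sub h1).sub h2
    exact this.congr_deriv (by ring)
  have hpev : ∀ᶠ t in nhds (0:ℝ), 0 < s₀ - 2*a*t - t^2 := by
    have hc : Continuous fun t : ℝ => s₀ - 2*a*t - t^2 := by continuity
    have h0 : s₀ - 2*a*0 - 0^2 = s₀ := by ring
    have := (hc.tendsto 0).eventually (eventually_gt_nhds (h0 ▸ hs₀))
    exact this
  -- derivative of g
  have hgd : ∀ t : ℝ, 0 < s₀ - 2*a*t - t^2 →
      HasDerivAt g (fderiv ℝ u (x₀ + t • e) e - (0 - 2 * ((-(2*a) - 2*t)/(s₀ - 2*a*t - t^2)))) t := by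
    intro t ht
    exact (hgu t).sub ((hasDerivAt_const t CC).sub (((hq t).log (ne_of_gt ht)).const_mul 2))
  have hderiv_eq : deriv g =ᶠ[nhds (0:ℝ)]
      fun t => fderiv ℝ u (x₀ + t • e) e - (0 - 2 * ((-(2*a) - 2*t)/(s₀ - 2*a*t - t^2))) :=
    hpev.mono fun t ht => (hgd t ht).deriv
  have hne0 : s₀ - 2*a*0 - 0^2 ≠ 0 := by
    have : s₀ - 2*a*0 - 0^2 = s₀ := by ring
    rw [this]; exact hs₀.ne'
  have hnum : HasDerivAt (fun t : ℝ => -(2*a) - 2*t) (0 - 2*1) 0 :=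
    (hasDerivAt_const (0:ℝ) (-(2*a))).sub ((hasDerivAt_id 0).const_mul 2)
  have hψ := hnum.div (hq 0) hne0
  have hRHS : HasDerivAt
      (fun t => fderiv ℝ u (x₀ + t • e) e - (0 - 2 * ((-(2*a) - 2*t)/(s₀ - 2*a*t - t^2))))
      (iteratedFDeriv ℝ 2 u x₀ ![e, e] -
        (0 - 2 * (((0 - 2*1) * (s₀ - 2*a*0 - 0^2) - (-(2*a) - 2*0) * (-(2*a) - 2*0)) /
          (s₀ - 2*a*0 - 0^2)^2))) 0 :=
    hgu2.sub ((hasDerivAt_const (0:ℝ) (0:ℝ)).sub (hψ.const_mul 2))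
  have hdd : HasDerivAt (deriv g) _ 0 := hRHS.congr_of_eventuallyEq hderiv_eq
  have hdiffev : ∀ᶠ t in nhds (0:ℝ), DifferentiableAt ℝ g t :=
    hpev.mono fun t ht => (hgd t ht).differentiableAt
  have hkey := aux_secondDeriv_nonpos hdiffev hdd hmax
  -- now pure algebra
  have habs : |a| ≤ ‖x₀‖ := by
    calc |a| ≤ ‖(inner ℂ x₀ e)‖ := Complex.abs_re_le_norm _
      _ = ‖(inner ℂ x₀ e)‖ := rfl
      _ ≤ ‖x₀‖ * ‖e‖ := norm_inner_le_norm _ _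
      _ = ‖x₀‖ := by rw [he, mul_one]
  have ha2 : a^2 ≤ ‖x₀‖^2 := by
    have := sq_abs a
    nlinarith [abs_nonneg a, norm_nonneg x₀]
  have hs₀R : s₀ ≤ R^2 := by
    rw [hs₀def]; nlinarith [norm_nonneg x₀]
  have hx2 : ‖x₀‖^2 ≤ R^2 := by rw [hs₀def] at hs₀; nlinarith
  have hfinal : iteratedFDeriv ℝ 2 u x₀ ![e, e] ≤ (4*s₀ + 8*a^2)/s₀^2 := by
    have hrw : (0 - 2 * (((0 - 2*1) * (s₀ - 2*a*0 - 0^2) - (-(2*a) - 2*0) * (-(2*a) - 2*0)) /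
          (s₀ - 2*a*0 - 0^2)^2)) = (4*s₀ + 8*a^2)/s₀^2 := by
      field_simp [hs₀.ne']
      ring
    rw [hrw] at hkey
    linarith
  calc iteratedFDeriv ℝ 2 u x₀ ![e, e] ≤ (4*s₀ + 8*a^2)/s₀^2 := hfinal
    _ ≤ (12*R^2)/s₀^2 := by
        gcongr
        nlinarith
    _ = 12 * R^2 / (R^2 - ‖x₀‖^2)^2 := by rw [hs₀def]

end Aux

/-- There is no `C²`, everywhere strictly positive function `v : ℂⁿ → ℝ` satisfying
`Δ(log v)(z) ≥ c · v(z)` for every `z ∈ ℂⁿ`. -/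
theorem no_global_log_supersolution (n : ℕ) (hn : 1 ≤ n) (c : ℝ) (hc : 0 < c) :
    ¬ ∃ v : EuclideanSpace ℂ (Fin n) → ℝ, ContDiff ℝ 2 v ∧ (∀ z, 0 < v z) ∧
      ∀ z, c * v z ≤ lapE n (fun w => Real.log (v w)) z := by
  rintro ⟨v, hv2, hvpos, hineq⟩
  have hn' : (1:ℝ) ≤ (n:ℝ) := by exact_mod_cast hn
  set K : ℝ := 24 * (n:ℝ) / c with hK
  have hKpos : 0 < K := by
    apply div_pos _ hc; nlinarith
  set u : EuclideanSpace ℂ (Fin n) → ℝ := fun z => Real.log (v z) with hudef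
  have hu : ContDiff ℝ 2 u := hv2.log fun z => (hvpos z).ne'
  have key : ∀ R : ℝ, 0 < R → v 0 ≤ K / R^2 := by
    intro R hR
    set B : EuclideanSpace ℂ (Fin n) → ℝ :=
      fun y => Real.log (K*R^2) - 2*Real.log (R^2 - ‖y‖^2) with hB
    set w : EuclideanSpace ℂ (Fin n) → ℝ := fun y => u y - B y with hw
    obtain ⟨xM, hxM, hxMmax⟩ := (isCompact_closedBall (0 : EuclideanSpace ℂ (Fin n)) R).exists_isMaxOn
      ⟨0, Metric.mem_closedBall_self hR.le⟩ (hu.continuous.continuousOn)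
    set M := u xM with hM
    set ε : ℝ := min (R^2/2) (Real.exp (-(M - u 0 + B 0 + 1 - Real.log (K*R^2))/2)) with hε
    have hεpos : 0 < ε := lt_min (by positivity) (Real.exp_pos _)
    have hεR : ε < R^2 := lt_of_le_of_lt (min_le_left _ _) (by nlinarith)
    have hbig : ∀ y : EuclideanSpace ℂ (Fin n), ‖y‖ < R → R^2 - ‖y‖^2 ≤ ε → w y < w 0 := by
      intro y hy1 hy2
      have h1 : 0 < R^2 - ‖y‖^2 := by nlinarith [norm_nonneg y]
      have h2 : Real.log (R^2 - ‖y‖^2) ≤ -(M - u 0 + B 0 + 1 - Real.log (K*R^2))/2 := by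
        calc Real.log (R^2 - ‖y‖^2) ≤ Real.log ε := Real.log_le_log h1 hy2
          _ ≤ Real.log (Real.exp (-(M - u 0 + B 0 + 1 - Real.log (K*R^2))/2)) :=
              Real.log_le_log hεpos (min_le_right _ _)
          _ = _ := Real.log_exp _
      have h3 : u y ≤ M := hxMmax (by simpa using hy1.le)
      have h4 : B y ≥ M - u 0 + B 0 + 1 := by
        simp only [hB]; linarith
      simp only [hw]
      linarith
    set ρ : ℝ := Real.sqrt (R^2 - ε) with hρ
    have hρpos : 0 < ρ := Real.sqrt_pos.mpr (by linarith)
    have hρsq : ρ^2 = R^2 - ε := Real.sq_sqrt (by linarith)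
    have hρR : ρ < R := by
      nlinarith [hρsq, hρpos]
    have hwcont : ContinuousOn w (Metric.closedBall (0 : EuclideanSpace ℂ (Fin n)) ρ) := by
      apply ContinuousOn.sub (hu.continuous.continuousOn)
      apply ContinuousOn.sub continuousOn_const
      apply ContinuousOn.mul continuousOn_const
      apply ContinuousOn.log ((continuous_const.sub ((continuous_norm).pow 2)).continuousOn)
      intro y hy
      have hy' : ‖y‖ ≤ ρ := by simpa using hy
      have : R^2 - ‖y‖^2 ≥ ε := by nlinarith [norm_nonneg y]
      exact ne_of_gt (lt_of_lt_of_le hεpos this)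
    obtain ⟨x₀, hx₀mem, hx₀max⟩ :=
      (isCompact_closedBall (0 : EuclideanSpace ℂ (Fin n)) ρ).exists_isMaxOn
        ⟨0, Metric.mem_closedBall_self hρpos.le⟩ hwcont
    have hx₀ : ‖x₀‖ ≤ ρ := by simpa using hx₀mem
    have hw0 : w 0 ≤ w x₀ := hx₀max (Metric.mem_closedBall_self hρpos.le)
    have hglobal : ∀ y : EuclideanSpace ℂ (Fin n), ‖y‖ < R → w y ≤ w x₀ := by
      intro y hy
      by_cases hcase : ‖y‖ ≤ ρ
      · exact hx₀max (by simpa using hcase)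
      · push_neg at hcase
        have : R^2 - ‖y‖^2 ≤ ε := by nlinarith
        exact le_trans (hbig y hy this).le hw0
    have hs₀ : 0 < R^2 - ‖x₀‖^2 := by nlinarith [norm_nonneg x₀]
    have hlocmax : ∀ e : EuclideanSpace ℂ (Fin n), ‖e‖ = 1 →
        IsLocalMax (fun t : ℝ => u (x₀ + t • e) -
          (Real.log (K*R^2) - 2*Real.log (R^2 - ‖x₀ + t • e‖^2))) 0 := by
      intro e he
      have hev : ∀ᶠ t : ℝ in nhds 0, |t| < R - ρ := by
        filter_upwards [Ioo_mem_nhds (by linarith : -(R-ρ) < (0:ℝ)) (by linarith : (0:ℝ) < R - ρ)]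
          with t ht
        rw [abs_lt]; exact ⟨by linarith [ht.1], ht.2⟩
      filter_upwards [hev] with t ht
      have hny : ‖x₀ + t • e‖ < R := by
        calc ‖x₀ + t • e‖ ≤ ‖x₀‖ + ‖t • e‖ := norm_add_le _ _
          _ = ‖x₀‖ + |t| := by rw [norm_smul, he, Real.norm_eq_abs, mul_one]
          _ < ρ + (R - ρ) := add_lt_add_of_le_of_lt hx₀ ht
          _ = R := by ring
      have h := hglobal _ hny
      simp only [hw, hB] at h ⊢
      simpa using h
    have hdir : ∀ e : EuclideanSpace ℂ (Fin n), ‖e‖ = 1 →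
        iteratedFDeriv ℝ 2 u x₀ ![e, e] ≤ 12 * R^2 / (R^2 - ‖x₀‖^2)^2 :=
      fun e he => aux_dir hu x₀ e he R (Real.log (K*R^2)) hs₀ (hlocmax e he)
    have hlap : lapE n u x₀ ≤ (n:ℝ) * (24 * R^2 / (R^2 - ‖x₀‖^2)^2) := by
      rw [lapE]
      calc (∑ j : Fin n, (iteratedFDeriv ℝ 2 u x₀
            ![EuclideanSpace.single j (1 : ℂ), EuclideanSpace.single j (1 : ℂ)] +
          iteratedFDeriv ℝ 2 u x₀
            ![EuclideanSpace.single j Complex.I, EuclideanSpace.single j Complex.I]))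
          ≤ ∑ j : Fin n, (12 * R^2 / (R^2 - ‖x₀‖^2)^2 + 12 * R^2 / (R^2 - ‖x₀‖^2)^2) := by
            apply Finset.sum_le_sum
            intro j _
            apply add_le_add
            · exact hdir _ (by simp [EuclideanSpace.norm_single])
            · exact hdir _ (by simp [EuclideanSpace.norm_single])
        _ = (n:ℝ) * (24 * R^2 / (R^2 - ‖x₀‖^2)^2) := by
            rw [Finset.sum_const, Finset.card_univ, Fintype.card_fin, nsmul_eq_mul]
            ring
    have hcv := hineq x₀
    have hvx₀ : v x₀ ≤ K * R^2 / (R^2 - ‖x₀‖^2)^2 := by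
      have h1 : c * v x₀ ≤ c * (K * R^2 / (R^2 - ‖x₀‖^2)^2) := by
        calc c * v x₀ ≤ lapE n u x₀ := hcv
          _ ≤ (n:ℝ) * (24 * R^2 / (R^2 - ‖x₀‖^2)^2) := hlap
          _ = c * (K * R^2 / (R^2 - ‖x₀‖^2)^2) := by
              rw [hK]; field_simp
      exact le_of_mul_le_mul_left h1 hc
    have hwx₀ : w x₀ ≤ 0 := by
      have h2 : u x₀ ≤ Real.log (K * R^2 / (R^2 - ‖x₀‖^2)^2) :=
        Real.log_le_log (hvpos x₀) hvx₀
      have h3 : Real.log (K * R^2 / (R^2 - ‖x₀‖^2)^2)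
          = Real.log (K * R^2) - 2 * Real.log (R^2 - ‖x₀‖^2) := by
        rw [Real.log_div (by positivity) (by positivity), Real.log_pow]
        push_cast; ring
      simp only [hw, hB]
      linarith [h2, h3]
    have hfin : u 0 ≤ Real.log K - Real.log (R^2) := by
      have hw0' : w 0 ≤ 0 := le_trans hw0 hwx₀
      have hB0 : B 0 = Real.log K - Real.log (R^2) := by
        simp only [hB, norm_zero]
        rw [Real.log_mul hKpos.ne' (by positivity)]
        ring_nf
      simp only [hw] at hw0'
      linarith [hB0, hw0']
    have hKR : Real.log K - Real.log (R^2) = Real.log (K / R^2) := by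
      rw [Real.log_div hKpos.ne' (by positivity)]
    rw [hKR] at hfin
    exact (Real.log_le_log_iff (hvpos 0) (by positivity)).mp hfin
  have hv0 := hvpos 0
  have h := key (Real.sqrt (2*K / v 0)) (Real.sqrt_pos.mpr (by positivity))
  rw [Real.sq_sqrt (by positivity : (0:ℝ) ≤ 2*K / v 0)] at h
  have heq : K / (2*K / v 0) = v 0 / 2 := by
    field_simp
  rw [heq] at h
  linarith
end

section
/- Let n ≥ 1 and let τ : ℂⁿ → ℝ be a C² smoothly plurisubharmonic function. Then the function (s₁, …, sₙ) ↦ M_τ(e^{s₁}, …, e^{sₙ}) is convex on ℝⁿ, where M_τ(t₁, …, tₙ) = ∫_{[0,2π]ⁿ} τ(t₁e^{iθ₁}, …, tₙe^{iθₙ}) dθ₁⋯dθₙ is the polycircle mean; that is, M_τ is convex in the variables log t_j. -/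
open MeasureTheory

/-- The polycircle mean `M_τ(t₁, …, tₙ) = ∫_{[0,2π]ⁿ} τ(t₁e^{iθ₁}, …, tₙe^{iθₙ}) dθ`. -/
noncomputable def polyMean (n : ℕ) (τ : (Fin n → ℂ) → ℝ) (t : Fin n → ℝ) : ℝ :=
  ∫ θ : Fin n → ℝ in Set.univ.pi (fun _ => Set.Icc 0 (2 * Real.pi)),
    τ (fun j => (t j : ℂ) * Complex.exp (Complex.I * (θ j : ℂ)))

open Complex Set

namespace PolyAux


variable {E' : Type*} [NormedAddCommGroup E'] [NormedSpace ℝ E']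

lemma curve1 {F : E' → ℝ} (hF : ContDiff ℝ 2 F) {γ : ℝ → E'} {γd : E'} {t₀ : ℝ}
    (hγ : HasDerivAt γ γd t₀) :
    HasDerivAt (fun t => F (γ t)) (fderiv ℝ F (γ t₀) γd) t₀ :=
  (((hF.differentiable (by norm_num)) (γ t₀)).hasFDerivAt).comp_hasDerivAt t₀ hγ

lemma curve2 {F : E' → ℝ} (hF : ContDiff ℝ 2 F) {γ δ : ℝ → E'} {γd δd : E'} {t₀ : ℝ}
    (hγ : HasDerivAt γ γd t₀) (hδ : HasDerivAt δ δd t₀) :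
    HasDerivAt (fun t => fderiv ℝ F (γ t) (δ t))
      (fderiv ℝ (fderiv ℝ F) (γ t₀) γd (δ t₀) + fderiv ℝ F (γ t₀) δd) t₀ := by
  have h1 : HasFDerivAt (fderiv ℝ F) (fderiv ℝ (fderiv ℝ F) (γ t₀)) (γ t₀) :=
    (((hF.fderiv_right (m := 1) (le_refl 2)).differentiable one_ne_zero) (γ t₀)).hasFDerivAt
  exact (h1.comp_hasDerivAt t₀ hγ).clm_apply hδ

/-- second derivative along a straight line, for a C² function. -/
lemma sdd_line {F : E' → ℝ} (hF : ContDiff ℝ 2 F) (a b : E') :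
    HasDerivAt (fun t : ℝ => fderiv ℝ F (a + t • b) b)
      (fderiv ℝ (fderiv ℝ F) a b b) 0 := by
  have hγ : ∀ t : ℝ, HasDerivAt (fun s : ℝ => a + s • b) b t := fun t => by
    simpa using ((hasDerivAt_id t).smul_const b).const_add a
  have := curve2 hF (hγ 0) (hasDerivAt_const (0:ℝ) b)
  simpa using this

lemma deriv_line {F : E' → ℝ} (hF : ContDiff ℝ 2 F) (a b : E') :
    deriv (fun s : ℝ => F (a + s • b)) = fun t => fderiv ℝ F (a + t • b) b := by
  funext t
  exact (curve1 hF (by simpa using ((hasDerivAt_id t).smul_const b).const_add a)).deriv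

lemma sdd_line' {F : E' → ℝ} (hF : ContDiff ℝ 2 F) (a b : E') :
    deriv (deriv (fun s : ℝ => F (a + s • b))) 0 = fderiv ℝ (fderiv ℝ F) a b b := by
  rw [deriv_line hF a b]
  exact (sdd_line hF a b).deriv

lemma levi_nonneg {n : ℕ} {τ : (Fin n → ℂ) → ℝ} (hC2 : ContDiff ℝ 2 τ)
    (hpsh : SmoothlyPsh n τ) (a b : Fin n → ℂ) :
    0 ≤ fderiv ℝ (fderiv ℝ τ) a b b
      + fderiv ℝ (fderiv ℝ τ) a (Complex.I • b) (Complex.I • b) := by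
  have hA : ContDiff ℝ 2 (fun u : ℂ => a + u • b) := by
    refine contDiff_const.add ?_
    have : (fun u : ℂ => u • b) = fun u : ℂ => (fun j => u * b j) := by
      funext u j; simp
    rw [this]
    exact contDiff_pi.mpr fun j => (contDiff_id.mul contDiff_const)
  set g : ℂ → ℝ := fun u : ℂ => τ (a + u • b) with hgdef
  have hg : ContDiff ℝ 2 g := hC2.comp hA
  have key : ∀ v : ℂ, fderiv ℝ (fderiv ℝ g) 0 v v
      = fderiv ℝ (fderiv ℝ τ) a (v • b) (v • b) := by
    intro v
    have hfun : (fun s : ℝ => g ((0:ℂ) + s • v)) = fun s : ℝ => τ (a + s • (v • b)) := by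
      funext s
      show τ (a + ((0:ℂ) + s • v) • b) = τ (a + s • (v • b))
      rw [zero_add, smul_assoc]
    have e1 : deriv (deriv (fun s : ℝ => g ((0:ℂ) + s • v))) 0
        = fderiv ℝ (fderiv ℝ g) 0 v v := by
      have := sdd_line' hg (0:ℂ) v
      simpa using this
    have e2 : deriv (deriv (fun s : ℝ => g ((0:ℂ) + s • v))) 0
        = fderiv ℝ (fderiv ℝ τ) a (v • b) (v • b) := by
      rw [hfun]
      exact sdd_line' hC2 a (v • b)
    rw [← e1, e2]
  have hp := hpsh a b 0
  have hl : lap2 (fun u : ℂ => τ (a + u • b)) 0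
      = fderiv ℝ (fderiv ℝ g) 0 1 1 + fderiv ℝ (fderiv ℝ g) 0 Complex.I Complex.I := by
    rw [lap2, iteratedFDeriv_two_apply, iteratedFDeriv_two_apply]
    rfl
  rw [hl, key 1, key Complex.I, one_smul] at hp
  exact hp



def eVec {n : ℕ} (j : Fin n) : Fin n → ℝ := Pi.single j 1

def Torus (n : ℕ) : Set (Fin n → ℝ) := Set.univ.pi fun _ => Set.Icc 0 (2 * Real.pi)

lemma torus_compact (n : ℕ) : IsCompact (Torus n) :=
  isCompact_univ_pi fun _ => isCompact_Icc

lemma hyperplane_null {n : ℕ} (j : Fin n) (a : ℝ) :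
    (volume : Measure (Fin n → ℝ)) {θ | θ j = a} = 0 := by
  have := MeasureTheory.Measure.pi_hyperplane (fun _ : Fin n => (volume : Measure ℝ)) j a
  simpa [MeasureTheory.volume_pi] using this

lemma setIntegral_shift {n : ℕ} (ρ : (Fin n → ℝ) → ℝ) (u : Fin n → ℝ) (S : Set (Fin n → ℝ)) :
    ∫ θ in (fun θ => θ + u) ⁻¹' S, ρ (θ + u) = ∫ θ in S, ρ θ :=
  (measurePreserving_add_right volume u).setIntegral_preimage_emb
    (MeasurableEquiv.addRight u).measurableEmbedding _ _

lemma single_add_val {n : ℕ} (j : Fin n) (w : ℝ) (θ : Fin n → ℝ) (i : Fin n) :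
    (θ + w • eVec j) i = θ i + (if i = j then w else 0) := by
  by_cases h : i = j
  · subst h; simp [eVec]
  · simp [eVec, Pi.single_eq_of_ne h, h]

lemma shift_one_core {n : ℕ} {ρ : (Fin n → ℝ) → ℝ} (hρ : Continuous ρ) (j : Fin n)
    (hperj : ∀ θ, ρ (θ + (2 * Real.pi) • eVec j) = ρ θ)
    {v : ℝ} (h0 : 0 ≤ v) (h2 : v ≤ 2 * Real.pi) :
    ∫ θ in Torus n, ρ (θ + v • eVec j) = ∫ θ in Torus n, ρ θ := by
  set p2 : ℝ := 2 * Real.pi with hp2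
  set P0 : Fin n → Set ℝ := fun _ => Icc 0 p2 with hP0
  set SA := univ.pi (Function.update P0 j (Icc 0 (p2 - v))) with hSA
  set SB := univ.pi (Function.update P0 j (Icc (p2 - v) p2)) with hSB
  set SA' := univ.pi (Function.update P0 j (Icc v p2)) with hSA'
  set SB' := univ.pi (Function.update P0 j (Icc 0 v)) with hSB'
  have hcomp : ∀ c d : ℝ, IsCompact (univ.pi (Function.update P0 j (Icc c d))) := by
    intro c d
    apply isCompact_univ_pi
    intro i
    rcases eq_or_ne i j with rfl | h
    · simpa using isCompact_Icc
    · simpa [Function.update_of_ne h, hP0] using isCompact_Icc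
  have hmeas : ∀ c d : ℝ, MeasurableSet (univ.pi (Function.update P0 j (Icc c d))) :=
    fun c d => (hcomp c d).isClosed.measurableSet
  -- unions
  have hunionT : Torus n = SA ∪ SB := by
    ext θ
    simp only [Torus, hSA, hSB, Set.mem_pi, Set.mem_univ, true_implies, Set.mem_union]
    constructor
    · intro h
      rcases le_total (θ j) (p2 - v) with hle | hle
      · left; intro i
        rcases eq_or_ne i j with rfl | hij
        · rw [Function.update_self]; exact ⟨(h i).1, hle⟩
        · rw [Function.update_of_ne hij]; exact h i
      · right; intro i
        rcases eq_or_ne i j with rfl | hij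
        · rw [Function.update_self]; exact ⟨hle, (h i).2⟩
        · rw [Function.update_of_ne hij]; exact h i
    · rintro (h | h) i
      · have hi := h i
        rcases eq_or_ne i j with rfl | hij
        · rw [Function.update_self] at hi
          exact ⟨hi.1, hi.2.trans (by linarith)⟩
        · rwa [Function.update_of_ne hij] at hi
      · have hi := h i
        rcases eq_or_ne i j with rfl | hij
        · rw [Function.update_self] at hi
          exact ⟨le_trans (by linarith) hi.1, hi.2⟩
        · rwa [Function.update_of_ne hij] at hi
  have hunionT' : Torus n = SA' ∪ SB' := by
    ext θ
    simp only [Torus, hSA', hSB', Set.mem_pi, Set.mem_univ, true_implies, Set.mem_union]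
    constructor
    · intro h
      rcases le_total (θ j) v with hle | hle
      · right; intro i
        rcases eq_or_ne i j with rfl | hij
        · rw [Function.update_self]; exact ⟨(h i).1, hle⟩
        · rw [Function.update_of_ne hij]; exact h i
      · left; intro i
        rcases eq_or_ne i j with rfl | hij
        · rw [Function.update_self]; exact ⟨hle, (h i).2⟩
        · rw [Function.update_of_ne hij]; exact h i
    · rintro (h | h) i
      · have hi := h i
        rcases eq_or_ne i j with rfl | hij
        · rw [Function.update_self] at hi
          exact ⟨le_trans h0 hi.1, hi.2⟩
        · rwa [Function.update_of_ne hij] at hi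
      · have hi := h i
        rcases eq_or_ne i j with rfl | hij
        · rw [Function.update_self] at hi
          exact ⟨hi.1, hi.2.trans h2⟩
        · rwa [Function.update_of_ne hij] at hi
  -- a.e. disjointness
  have hdisjAB : AEDisjoint volume SA SB := by
    refine measure_mono_null (fun θ hθ => ?_) (hyperplane_null j (p2 - v))
    have h1 := hθ.1 j (mem_univ j)
    have h2' := hθ.2 j (mem_univ j)
    rw [Function.update_self] at h1 h2'
    exact le_antisymm h1.2 h2'.1
  have hdisjAB' : AEDisjoint volume SA' SB' := by
    refine measure_mono_null (fun θ hθ => ?_) (hyperplane_null j v)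
    have h1 := hθ.1 j (mem_univ j)
    have h2' := hθ.2 j (mem_univ j)
    rw [Function.update_self] at h1 h2'
    exact le_antisymm h2'.2 h1.1
  -- preimage identities
  have hpreA : (fun θ => θ + v • eVec j) ⁻¹' SA' = SA := by
    ext θ
    simp only [Set.mem_preimage, hSA, hSA', Set.mem_pi, Set.mem_univ, true_implies]
    constructor <;> intro h i <;> have hi := h i <;> rcases eq_or_ne i j with rfl | hij
    · rw [Function.update_self] at hi ⊢
      rw [single_add_val, if_pos rfl] at hi
      exact ⟨by linarith [hi.1], by linarith [hi.2]⟩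
    · rw [Function.update_of_ne hij] at hi ⊢
      rwa [single_add_val, if_neg hij, add_zero] at hi
    · rw [Function.update_self] at hi ⊢
      rw [single_add_val, if_pos rfl]
      exact ⟨by linarith [hi.1], by linarith [hi.2]⟩
    · rw [Function.update_of_ne hij] at hi ⊢
      rwa [single_add_val, if_neg hij, add_zero]
  have hpreB : (fun θ => θ + (v - p2) • eVec j) ⁻¹' SB' = SB := by
    ext θ
    simp only [Set.mem_preimage, hSB, hSB', Set.mem_pi, Set.mem_univ, true_implies]
    constructor <;> intro h i <;> have hi := h i <;> rcases eq_or_ne i j with rfl | hij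
    · rw [Function.update_self] at hi ⊢
      rw [single_add_val, if_pos rfl] at hi
      exact ⟨by linarith [hi.1], by linarith [hi.2]⟩
    · rw [Function.update_of_ne hij] at hi ⊢
      rwa [single_add_val, if_neg hij, add_zero] at hi
    · rw [Function.update_self] at hi ⊢
      rw [single_add_val, if_pos rfl]
      exact ⟨by linarith [hi.1], by linarith [hi.2]⟩
    · rw [Function.update_of_ne hij] at hi ⊢
      rwa [single_add_val, if_neg hij, add_zero]
  -- integrability
  have hint : ∀ (c d : ℝ) (f : (Fin n → ℝ) → ℝ), Continuous f →
      IntegrableOn f (univ.pi (Function.update P0 j (Icc c d))) volume := by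
    intro c d f hf
    exact hf.continuousOn.integrableOn_compact (hcomp c d)
  have hρs : Continuous fun θ => ρ (θ + v • eVec j) :=
    hρ.comp (continuous_id.add continuous_const)
  -- steps
  have stepA : ∫ θ in SA, ρ (θ + v • eVec j) = ∫ θ in SA', ρ θ := by
    rw [← hpreA]; exact setIntegral_shift ρ _ SA'
  have hpt : ∀ θ, ρ (θ + v • eVec j) = ρ (θ + (v - p2) • eVec j) := by
    intro θ
    have h := hperj (θ + (v - p2) • eVec j)
    rw [← h]
    congr 1
    rw [add_assoc, ← add_smul, sub_add_cancel]
  have stepB : ∫ θ in SB, ρ (θ + v • eVec j) = ∫ θ in SB', ρ θ := by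
    calc ∫ θ in SB, ρ (θ + v • eVec j)
        = ∫ θ in SB, ρ (θ + (v - p2) • eVec j) := by
          exact setIntegral_congr_fun (hmeas _ _) fun θ _ => hpt θ
      _ = ∫ θ in SB', ρ θ := by
          rw [← hpreB]; exact setIntegral_shift ρ _ SB'
  calc ∫ θ in Torus n, ρ (θ + v • eVec j)
      = (∫ θ in SA, ρ (θ + v • eVec j)) + ∫ θ in SB, ρ (θ + v • eVec j) := by
        rw [hunionT]
        exact integral_union_ae hdisjAB (hmeas _ _).nullMeasurableSet
          (hint _ _ _ hρs) (hint _ _ _ hρs)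
    _ = (∫ θ in SA', ρ θ) + ∫ θ in SB', ρ θ := by rw [stepA, stepB]
    _ = ∫ θ in Torus n, ρ θ := by
        rw [hunionT']
        exact (integral_union_ae hdisjAB' (hmeas _ _).nullMeasurableSet
          (hint _ _ _ hρ) (hint _ _ _ hρ)).symm


lemma per_int {n : ℕ} {ρ : (Fin n → ℝ) → ℝ} (j : Fin n)
    (hperj : ∀ θ, ρ (θ + (2 * Real.pi) • eVec j) = ρ θ) :
    ∀ (m : ℤ) (θ), ρ (θ + ((m : ℝ) * (2 * Real.pi)) • eVec j) = ρ θ := by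
  intro m
  induction m using Int.induction_on with
  | zero => intro θ; simp
  | succ k ih =>
      intro θ
      have hv : θ + (((k : ℝ) + 1) * (2 * Real.pi)) • eVec j
          = (θ + ((k : ℝ) * (2 * Real.pi)) • eVec j) + (2 * Real.pi) • eVec j := by
        rw [add_assoc, ← add_smul]
        congr 1
        ring
      push_cast at ih ⊢
      rw [hv, hperj]
      exact ih θ
  | pred k ih =>
      intro θ
      have h := hperj (θ + ((-(k : ℝ) - 1) * (2 * Real.pi)) • eVec j)
      have hv : θ + ((-(k : ℝ) - 1) * (2 * Real.pi)) • eVec j + (2 * Real.pi) • eVec j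
          = θ + ((-(k : ℝ)) * (2 * Real.pi)) • eVec j := by
        rw [add_assoc, ← add_smul]
        congr 1
        ring
      rw [hv] at h
      have h2 := ih θ
      push_cast at h2 h ⊢
      exact h.symm.trans h2

lemma shift_one {n : ℕ} {ρ : (Fin n → ℝ) → ℝ} (hρ : Continuous ρ) (j : Fin n)
    (hperj : ∀ θ, ρ (θ + (2 * Real.pi) • eVec j) = ρ θ) (v : ℝ) :
    ∫ θ in Torus n, ρ (θ + v • eVec j) = ∫ θ in Torus n, ρ θ := by
  have hπ : (0 : ℝ) < 2 * Real.pi := by positivity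
  set k : ℤ := ⌊v / (2 * Real.pi)⌋ with hk
  set v' : ℝ := v - (k : ℝ) * (2 * Real.pi) with hv'
  have hcan : v / (2 * Real.pi) * (2 * Real.pi) = v := div_mul_cancel₀ v (ne_of_gt hπ)
  have h0 : 0 ≤ v' := by
    have h := mul_le_mul_of_nonneg_right (Int.floor_le (v / (2 * Real.pi))) hπ.le
    rw [hcan] at h
    rw [hv']
    linarith
  have h2 : v' ≤ 2 * Real.pi := by
    have h := mul_lt_mul_of_pos_right (Int.lt_floor_add_one (v / (2 * Real.pi))) hπ
    rw [hcan, add_mul, one_mul] at h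
    rw [hv']
    linarith
  have hpt : ∀ θ, ρ (θ + v • eVec j) = ρ (θ + v' • eVec j) := by
    intro θ
    have h := per_int j hperj k (θ + v' • eVec j)
    rw [← h, add_assoc, ← add_smul]
    congr 2
    rw [hv']
    ring
  simp_rw [hpt]
  exact shift_one_core hρ j hperj h0 h2

lemma torus_translate {n : ℕ} {ρ : (Fin n → ℝ) → ℝ} (hρ : Continuous ρ)
    (hper : ∀ (j : Fin n) θ, ρ (θ + (2 * Real.pi) • eVec j) = ρ θ) (v : Fin n → ℝ) :
    ∫ θ in Torus n, ρ (θ + v) = ∫ θ in Torus n, ρ θ := by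
  have key : ∀ s : Finset (Fin n), ∀ ρ : (Fin n → ℝ) → ℝ, Continuous ρ →
      (∀ (j : Fin n) θ, ρ (θ + (2 * Real.pi) • eVec j) = ρ θ) →
      ∫ θ in Torus n, ρ (θ + ∑ j ∈ s, (v j) • eVec j) = ∫ θ in Torus n, ρ θ := by
    intro s
    induction s using Finset.induction_on with
    | empty => intro ρ hρ hper; simp
    | insert a s ha ih =>
        intro ρ hρ hper
        rw [Finset.sum_insert ha]
        set S := ∑ j ∈ s, (v j) • eVec j with hS
        have hrw : ∀ θ, θ + ((v a) • eVec a + S) = (θ + (v a) • eVec a) + S := by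
          intro θ; rw [add_assoc]
        simp_rw [hrw]
        set ρ' : (Fin n → ℝ) → ℝ := fun θ => ρ (θ + S) with hρ'
        have hρ'c : Continuous ρ' := hρ.comp (continuous_id.add continuous_const)
        have hρ'per : ∀ (j : Fin n) θ, ρ' (θ + (2 * Real.pi) • eVec j) = ρ' θ := by
          intro j θ
          show ρ (θ + (2 * Real.pi) • eVec j + S) = ρ (θ + S)
          have : θ + (2 * Real.pi) • eVec j + S = (θ + S) + (2 * Real.pi) • eVec j := by
            abel
          rw [this, hper]
        have h1 : ∫ θ in Torus n, ρ' (θ + (v a) • eVec a) = ∫ θ in Torus n, ρ' θ :=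
          shift_one hρ'c a (hρ'per a) (v a)
        calc ∫ θ in Torus n, ρ (θ + (v a) • eVec a + S)
            = ∫ θ in Torus n, ρ' (θ + (v a) • eVec a) := rfl
          _ = ∫ θ in Torus n, ρ' θ := h1
          _ = ∫ θ in Torus n, ρ θ := ih ρ hρ hper
  have hv : v = ∑ j : Fin n, (v j) • eVec j := by
    funext i
    rw [Finset.sum_apply]
    simp [eVec, Pi.single_apply]
  calc ∫ θ in Torus n, ρ (θ + v)
      = ∫ θ in Torus n, ρ (θ + ∑ j : Fin n, (v j) • eVec j) := by rw [← hv]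
    _ = ∫ θ in Torus n, ρ θ := key Finset.univ ρ hρ hper


-- ## differentiation under the integral over the torus

lemma hasDerivAt_setIntegral_torus {n : ℕ} {F F' : ℝ → (Fin n → ℝ) → ℝ}
    (hF : Continuous fun p : ℝ × (Fin n → ℝ) => F p.1 p.2)
    (hF' : Continuous fun p : ℝ × (Fin n → ℝ) => F' p.1 p.2)
    (hd : ∀ θ t, HasDerivAt (fun t => F t θ) (F' t θ) t) (t₀ : ℝ) :
    HasDerivAt (fun t => ∫ θ in Torus n, F t θ) (∫ θ in Torus n, F' t₀ θ) t₀ := by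
  have hFt : ∀ t, Continuous (F t) := fun t => hF.comp (continuous_const.prodMk continuous_id)
  have hF't : ∀ t, Continuous (F' t) := fun t => hF'.comp (continuous_const.prodMk continuous_id)
  obtain ⟨C, hC⟩ := (isCompact_Icc.prod (torus_compact n)).exists_bound_of_continuousOn
      (s := Icc (t₀ - 1) (t₀ + 1) ×ˢ Torus n) hF'.continuousOn
  have hmeasT : MeasurableSet (Torus n) := (torus_compact n).isClosed.measurableSet
  refine (hasDerivAt_integral_of_dominated_loc_of_deriv_le (μ := volume.restrict (Torus n))
    (F := F) (F' := F') (bound := fun _ => C) (s := Metric.ball t₀ 1) (Metric.ball_mem_nhds t₀ one_pos)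
    (Filter.Eventually.of_forall fun t => (hFt t).aestronglyMeasurable)
    ((hFt t₀).continuousOn.integrableOn_compact (torus_compact n))
    ((hF't t₀).aestronglyMeasurable)
    ?_ ?_ ?_).2
  · refine (ae_restrict_iff' hmeasT).mpr (Filter.Eventually.of_forall fun θ hθ t ht => ?_)
    refine hC (t, θ) ⟨?_, hθ⟩
    have h := Metric.mem_ball.mp ht
    rw [Real.dist_eq] at h
    have h' := abs_lt.mp h
    exact ⟨by linarith [h'.1], by linarith [h'.2]⟩
  · exact integrableOn_const ((torus_compact n).measure_lt_top.ne)
  · exact Filter.Eventually.of_forall fun θ t _ => hd θ t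

-- ## the exponential map and its derivatives along real lines in ℂ

noncomputable def Zf {n : ℕ} (x c : Fin n → ℝ) (w : ℂ) (θ : Fin n → ℝ) : Fin n → ℂ :=
  fun j => Complex.exp ((x j : ℂ) + w * (c j : ℂ) + Complex.I * (θ j : ℂ))

lemma Zf_curve {n : ℕ} (x c : Fin n → ℝ) (v w₀ : ℂ) (θ : Fin n → ℝ) (t : ℝ) :
    HasDerivAt (fun t : ℝ => Zf x c (w₀ + t • v) θ)
      (fun j => (v * c j) * Zf x c (w₀ + t • v) θ j) t := by
  refine hasDerivAt_pi.mpr fun j => ?_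
  have harg : ∀ s : ℝ, (x j : ℂ) + (w₀ + s • v) * c j + Complex.I * θ j
      = ((x j : ℂ) + w₀ * c j + Complex.I * θ j) + (s : ℂ) * (v * c j) := by
    intro s; rw [Complex.real_smul]; ring
  have h1 : HasDerivAt (fun s : ℝ =>
      ((x j : ℂ) + w₀ * c j + Complex.I * θ j) + (s : ℂ) * (v * c j)) (v * c j) t := by
    simpa using (((hasDerivAt_id t).ofReal_comp).mul_const (v * c j)).const_add
      ((x j : ℂ) + w₀ * c j + Complex.I * θ j)
  have h2 := h1.cexp
  have heq : (fun s : ℝ => Zf x c (w₀ + s • v) θ j)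
      = fun s : ℝ => Complex.exp (((x j : ℂ) + w₀ * c j + Complex.I * θ j) + (s : ℂ) * (v * c j)) := by
    funext s; rw [Zf, ← harg s]
  rw [heq]
  have hval : (v * c j) * Zf x c (w₀ + t • v) θ j
      = Complex.exp (((x j : ℂ) + w₀ * c j + Complex.I * θ j) + (t : ℂ) * (v * c j)) * (v * c j) := by
    rw [Zf, ← harg t, mul_comm]
  rw [hval]
  exact h2

lemma Zf_curve' {n : ℕ} (x c : Fin n → ℝ) (v w₀ : ℂ) (θ : Fin n → ℝ) (t : ℝ) :
    HasDerivAt (fun t : ℝ => (fun j => (v * c j) * Zf x c (w₀ + t • v) θ j))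
      (fun j => (v * c j) * ((v * c j) * Zf x c (w₀ + t • v) θ j)) t := by
  refine hasDerivAt_pi.mpr fun j => ?_
  exact (hasDerivAt_pi.mp (Zf_curve x c v w₀ θ t) j).const_mul (v * c j)

-- abbreviations for the integrands

noncomputable def A1 {n : ℕ} (τ : (Fin n → ℂ) → ℝ) (x c : Fin n → ℝ) (v w : ℂ)
    (θ : Fin n → ℝ) : ℝ :=
  fderiv ℝ τ (Zf x c w θ) (fun j => (v * c j) * Zf x c w θ j)

noncomputable def A2 {n : ℕ} (τ : (Fin n → ℂ) → ℝ) (x c : Fin n → ℝ) (v w : ℂ)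
    (θ : Fin n → ℝ) : ℝ :=
  fderiv ℝ (fderiv ℝ τ) (Zf x c w θ) (fun j => (v * c j) * Zf x c w θ j)
      (fun j => (v * c j) * Zf x c w θ j)
    + fderiv ℝ τ (Zf x c w θ) (fun j => (v * c j) * ((v * c j) * Zf x c w θ j))

lemma hasDerivAt_ff {n : ℕ} {τ : (Fin n → ℂ) → ℝ} (hC2 : ContDiff ℝ 2 τ)
    (x c : Fin n → ℝ) (v w₀ : ℂ) (θ : Fin n → ℝ) (t : ℝ) :
    HasDerivAt (fun t : ℝ => τ (Zf x c (w₀ + t • v) θ)) (A1 τ x c v (w₀ + t • v) θ) t :=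
  curve1 hC2 (Zf_curve x c v w₀ θ t)

lemma hasDerivAt_A1 {n : ℕ} {τ : (Fin n → ℂ) → ℝ} (hC2 : ContDiff ℝ 2 τ)
    (x c : Fin n → ℝ) (v w₀ : ℂ) (θ : Fin n → ℝ) (t : ℝ) :
    HasDerivAt (fun t : ℝ => A1 τ x c v (w₀ + t • v) θ) (A2 τ x c v (w₀ + t • v) θ) t :=
  curve2 hC2 (Zf_curve x c v w₀ θ t) (Zf_curve' x c v w₀ θ t)

-- continuity (parametrized, to keep unification cheap)

section Cont
variable {X : Type*} [TopologicalSpace X]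

lemma Zf_cont {n : ℕ} (x c : Fin n → ℝ) {φ : X → ℂ} {ψ : X → Fin n → ℝ}
    (hφ : Continuous φ) (hψ : Continuous ψ) :
    Continuous fun p : X => Zf x c (φ p) (ψ p) := by
  refine continuous_pi fun j => Complex.continuous_exp.comp ?_
  exact (continuous_const.add (hφ.mul continuous_const)).add
    (continuous_const.mul (Complex.continuous_ofReal.comp ((continuous_apply j).comp hψ)))

lemma Zd_cont {n : ℕ} (x c : Fin n → ℝ) (v : ℂ) {φ : X → ℂ} {ψ : X → Fin n → ℝ}
    (hφ : Continuous φ) (hψ : Continuous ψ) :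
    Continuous fun p : X => (fun j => (v * c j) * Zf x c (φ p) (ψ p) j) := by
  refine continuous_pi fun j => ?_
  exact continuous_const.mul ((continuous_apply j).comp (Zf_cont x c hφ hψ))

lemma Zdd_cont {n : ℕ} (x c : Fin n → ℝ) (v : ℂ) {φ : X → ℂ} {ψ : X → Fin n → ℝ}
    (hφ : Continuous φ) (hψ : Continuous ψ) :
    Continuous fun p : X => (fun j => (v * c j) * ((v * c j) * Zf x c (φ p) (ψ p) j)) := by
  refine continuous_pi fun j => ?_
  exact continuous_const.mul (continuous_const.mul ((continuous_apply j).comp (Zf_cont x c hφ hψ)))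

lemma ff_cont {n : ℕ} {τ : (Fin n → ℂ) → ℝ} (hC2 : ContDiff ℝ 2 τ) (x c : Fin n → ℝ)
    {φ : X → ℂ} {ψ : X → Fin n → ℝ} (hφ : Continuous φ) (hψ : Continuous ψ) :
    Continuous fun p : X => τ (Zf x c (φ p) (ψ p)) :=
  hC2.continuous.comp (Zf_cont x c hφ hψ)

lemma A1_cont {n : ℕ} {τ : (Fin n → ℂ) → ℝ} (hC2 : ContDiff ℝ 2 τ) (x c : Fin n → ℝ) (v : ℂ)
    {φ : X → ℂ} {ψ : X → Fin n → ℝ} (hφ : Continuous φ) (hψ : Continuous ψ) :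
    Continuous fun p : X => A1 τ x c v (φ p) (ψ p) := by
  have hT1 : Continuous (fderiv ℝ τ) := (hC2.fderiv_right (m := 1) (by norm_num)).continuous
  exact (hT1.comp (Zf_cont x c hφ hψ)).clm_apply (Zd_cont x c v hφ hψ)

lemma A2_cont {n : ℕ} {τ : (Fin n → ℂ) → ℝ} (hC2 : ContDiff ℝ 2 τ) (x c : Fin n → ℝ) (v : ℂ)
    {φ : X → ℂ} {ψ : X → Fin n → ℝ} (hφ : Continuous φ) (hψ : Continuous ψ) :
    Continuous fun p : X => A2 τ x c v (φ p) (ψ p) := by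
  have hT1 : ContDiff ℝ 1 (fderiv ℝ τ) := hC2.fderiv_right (m := 1) (by norm_num)
  have hT2 : Continuous (fderiv ℝ (fderiv ℝ τ)) := hT1.continuous_fderiv one_ne_zero
  refine Continuous.add ?_ ?_
  · exact ((hT2.comp (Zf_cont x c hφ hψ)).clm_apply (Zd_cont x c v hφ hψ)).clm_apply
      (Zd_cont x c v hφ hψ)
  · exact (hT1.continuous.comp (Zf_cont x c hφ hψ)).clm_apply (Zdd_cont x c v hφ hψ)

end Cont

-- pointwise Levi positivity

lemma levi_pointwise {n : ℕ} {τ : (Fin n → ℂ) → ℝ} (hC2 : ContDiff ℝ 2 τ)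
    (hpsh : SmoothlyPsh n τ) (x c : Fin n → ℝ) (w : ℂ) (θ : Fin n → ℝ) :
    0 ≤ A2 τ x c 1 w θ + A2 τ x c Complex.I w θ := by
  set z := Zf x c w θ with hz
  set bb : Fin n → ℂ := fun j => (c j : ℂ) * z j with hbb
  have h1 : (fun j => ((1:ℂ) * c j) * z j) = bb := by funext j; simp [hbb]
  have h2 : (fun j => ((1:ℂ) * c j) * ((1 * c j) * z j)) = fun j => (c j : ℂ) * ((c j : ℂ) * z j) := by
    funext j; simp
  have h3 : (fun j => (Complex.I * c j) * z j) = Complex.I • bb := by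
    funext j; simp [hbb]; ring
  have h4 : (fun j => (Complex.I * c j) * ((Complex.I * c j) * z j))
      = -(fun j => (c j : ℂ) * ((c j : ℂ) * z j)) := by
    funext j
    simp only [Pi.neg_apply]
    rw [show (Complex.I * (c j : ℂ)) * ((Complex.I * (c j : ℂ)) * z j)
        = (Complex.I * Complex.I) * ((c j : ℂ) * ((c j : ℂ) * z j)) by ring, Complex.I_mul_I]
    ring
  have hlevi := levi_nonneg hC2 hpsh z bb
  rw [A2, A2, ← hz, h1, h2, h3, h4, map_neg]
  linarith [hlevi]

end PolyAux

open PolyAux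

/-- The polycircle mean of a `C²` smoothly plurisubharmonic function is convex in the
variables `log t_j`: the function `(s₁, …, sₙ) ↦ M_τ(e^{s₁}, …, e^{sₙ})` is convex on `ℝⁿ`. -/
theorem polyMean_convexOn_log (n : ℕ) (hn : 1 ≤ n) (τ : (Fin n → ℂ) → ℝ)
    (hC2 : ContDiff ℝ 2 τ) (hpsh : SmoothlyPsh n τ) :
    ConvexOn ℝ Set.univ (fun s : Fin n → ℝ => polyMean n τ (fun j => Real.exp (s j))) := by
  refine ⟨convex_univ, ?_⟩
  intro x hx y hy a b ha hb hab
  set c : Fin n → ℝ := y - x with hc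
  set g : ℝ → ℝ := fun t => ∫ θ in Torus n, τ (Zf x c (t : ℂ) θ) with hg
  have hmeasT : MeasurableSet (Torus n) := (torus_compact n).isClosed.measurableSet
  -- polyMean along the segment equals g
  have hgval : ∀ t : ℝ, polyMean n τ (fun j => Real.exp (x j + t * c j)) = g t := by
    intro t
    show (∫ θ : Fin n → ℝ in Set.univ.pi (fun _ => Set.Icc 0 (2 * Real.pi)),
        τ (fun j => ((Real.exp (x j + t * c j) : ℝ) : ℂ) * Complex.exp (Complex.I * (θ j : ℂ))))
      = ∫ θ in Torus n, τ (Zf x c (t : ℂ) θ)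
    refine setIntegral_congr_fun hmeasT fun θ _ => ?_
    congr 1
    funext j
    rw [Zf, Complex.ofReal_exp, ← Complex.exp_add]
    congr 1
    push_cast
    ring
  -- cast continuity helper
  have hφR : Continuous (fun p : ℝ × (Fin n → ℝ) => ((p.1 : ℂ))) :=
    Complex.continuous_ofReal.comp continuous_fst
  have hfc : Continuous fun p : ℝ × (Fin n → ℝ) => τ (Zf x c (p.1 : ℂ) p.2) :=
    ff_cont hC2 x c hφR continuous_snd
  have hA1c : Continuous fun p : ℝ × (Fin n → ℝ) => A1 τ x c 1 (p.1 : ℂ) p.2 :=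
    A1_cont hC2 x c 1 hφR continuous_snd
  have hA2c : Continuous fun p : ℝ × (Fin n → ℝ) => A2 τ x c 1 (p.1 : ℂ) p.2 :=
    A2_cont hC2 x c 1 hφR continuous_snd
  -- derivatives in the real direction
  have hd1 : ∀ (θ : Fin n → ℝ) (t : ℝ),
      HasDerivAt (fun t : ℝ => τ (Zf x c (t : ℂ) θ)) (A1 τ x c 1 (t : ℂ) θ) t := by
    intro θ t
    have h := hasDerivAt_ff hC2 x c 1 0 θ t
    simpa only [zero_add, Complex.real_smul, mul_one] using h
  have hd2 : ∀ (θ : Fin n → ℝ) (t : ℝ),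
      HasDerivAt (fun t : ℝ => A1 τ x c 1 (t : ℂ) θ) (A2 τ x c 1 (t : ℂ) θ) t := by
    intro θ t
    have h := hasDerivAt_A1 hC2 x c 1 0 θ t
    simpa only [zero_add, Complex.real_smul, mul_one] using h
  have hg' : ∀ t₀ : ℝ, HasDerivAt g (∫ θ in Torus n, A1 τ x c 1 (t₀ : ℂ) θ) t₀ :=
    fun t₀ => hasDerivAt_setIntegral_torus hfc hA1c hd1 t₀
  have hg'' : ∀ t₀ : ℝ, HasDerivAt (fun t : ℝ => ∫ θ in Torus n, A1 τ x c 1 (t : ℂ) θ)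
      (∫ θ in Torus n, A2 τ x c 1 (t₀ : ℂ) θ) t₀ :=
    fun t₀ => hasDerivAt_setIntegral_torus hA1c hA2c hd2 t₀
  -- vanishing of the imaginary-direction second derivative on average
  have hIzero : ∀ t₀ : ℝ, ∫ θ in Torus n, A2 τ x c Complex.I (t₀ : ℂ) θ = 0 := by
    intro t₀
    have hRI : Continuous (fun p : ℝ × (Fin n → ℝ) => ((t₀ : ℂ) + p.1 • Complex.I)) :=
      continuous_const.add (continuous_fst.smul continuous_const)
    have hGd : ∀ s : ℝ,
        HasDerivAt (fun s : ℝ => ∫ θ in Torus n, τ (Zf x c ((t₀ : ℂ) + s • Complex.I) θ))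
          (∫ θ in Torus n, A1 τ x c Complex.I ((t₀ : ℂ) + s • Complex.I) θ) s := by
      intro s
      exact hasDerivAt_setIntegral_torus (ff_cont hC2 x c hRI continuous_snd)
        (A1_cont hC2 x c Complex.I hRI continuous_snd)
        (fun θ s => hasDerivAt_ff hC2 x c Complex.I (t₀ : ℂ) θ s) s
    -- the function is constant in s by rotation invariance
    have hper : ∀ (j : Fin n) (θ : Fin n → ℝ),
        τ (Zf x c (t₀ : ℂ) (θ + (2 * Real.pi) • eVec j)) = τ (Zf x c (t₀ : ℂ) θ) := by
      intro j θ
      congr 1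
      funext i
      rw [Zf, Zf]
      rw [show ((θ + (2 * Real.pi) • eVec j) i : ℂ)
          = (θ i : ℂ) + (if i = j then ((2 * Real.pi : ℝ) : ℂ) else 0) by
        rw [single_add_val]; push_cast [apply_ite (fun r : ℝ => (r : ℂ))]; rfl]
      by_cases hij : i = j
      · rw [if_pos hij, mul_add, ← add_assoc, Complex.exp_add,
          show Complex.I * ((2 * Real.pi : ℝ) : ℂ) = 2 * Real.pi * Complex.I by push_cast; ring,
          Complex.exp_two_pi_mul_I, mul_one]
      · rw [if_neg hij, add_zero]
    have hGconst : ∀ s : ℝ,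
        (∫ θ in Torus n, τ (Zf x c ((t₀ : ℂ) + s • Complex.I) θ))
          = ∫ θ in Torus n, τ (Zf x c (t₀ : ℂ) θ) := by
      intro s
      have hpt : ∀ θ, τ (Zf x c ((t₀ : ℂ) + s • Complex.I) θ) = τ (Zf x c (t₀ : ℂ) (θ + s • c)) := by
        intro θ
        congr 1
        funext j
        rw [Zf, Zf]
        simp only [Pi.add_apply, Pi.smul_apply, Pi.sub_apply, smul_eq_mul]
        push_cast [Complex.real_smul]
        ring
      rw [setIntegral_congr_fun hmeasT fun θ _ => hpt θ]
      exact torus_translate (ff_cont hC2 x c continuous_const continuous_id) hper (s • c)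
    have hzero1 : ∀ s : ℝ,
        ∫ θ in Torus n, A1 τ x c Complex.I ((t₀ : ℂ) + s • Complex.I) θ = 0 := by
      intro s
      have h1 := hGd s
      rw [funext hGconst] at h1
      exact h1.unique (hasDerivAt_const s _)
    have hGd2 := hasDerivAt_setIntegral_torus (A1_cont hC2 x c Complex.I hRI continuous_snd)
      (A2_cont hC2 x c Complex.I hRI continuous_snd)
      (fun θ s => hasDerivAt_A1 hC2 x c Complex.I (t₀ : ℂ) θ s) 0
    rw [funext hzero1] at hGd2
    have h4 := (hasDerivAt_const (0 : ℝ) (0 : ℝ)).unique hGd2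
    simpa using h4.symm
  -- nonnegativity of g''
  have hpos : ∀ t₀ : ℝ, 0 ≤ ∫ θ in Torus n, A2 τ x c 1 (t₀ : ℂ) θ := by
    intro t₀
    have hI1 : IntegrableOn (fun θ => A2 τ x c 1 (t₀ : ℂ) θ) (Torus n) volume :=
      ((A2_cont hC2 x c 1 continuous_const continuous_id).continuousOn).integrableOn_compact
        (torus_compact n)
    have hI2 : IntegrableOn (fun θ => A2 τ x c Complex.I (t₀ : ℂ) θ) (Torus n) volume :=
      ((A2_cont hC2 x c Complex.I continuous_const continuous_id).continuousOn).integrableOn_compact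
        (torus_compact n)
    have h0 : 0 ≤ ∫ θ in Torus n, (A2 τ x c 1 (t₀ : ℂ) θ + A2 τ x c Complex.I (t₀ : ℂ) θ) :=
      setIntegral_nonneg hmeasT fun θ _ => levi_pointwise hC2 hpsh x c _ θ
    rw [integral_add hI1 hI2, hIzero t₀, add_zero] at h0
    exact h0
  -- convexity of g
  have hdg : deriv g = fun t : ℝ => ∫ θ in Torus n, A1 τ x c 1 (t : ℂ) θ :=
    funext fun t => (hg' t).deriv
  have hgc : ConvexOn ℝ Set.univ g := by
    refine convexOn_of_deriv2_nonneg convex_univ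
      (continuous_iff_continuousAt.mpr fun t => (hg' t).continuousAt).continuousOn
      (fun t _ => (hg' t).differentiableAt.differentiableWithinAt) ?_ ?_
    · intro t _
      rw [hdg]
      exact (hg'' t).differentiableAt.differentiableWithinAt
    · intro t _
      have h2 : deriv (deriv g) t = ∫ θ in Torus n, A2 τ x c 1 (t : ℂ) θ := by
        rw [hdg]; exact (hg'' t).deriv
      show 0 ≤ deriv^[2] g t
      rw [show deriv^[2] g t = deriv (deriv g) t from rfl, h2]
      exact hpos t
  -- assemble
  have ha' : a = 1 - b := by linarith
  have key := hgc.2 (Set.mem_univ (0 : ℝ)) (Set.mem_univ (1 : ℝ)) ha hb hab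
  have e0 : polyMean n τ (fun j => Real.exp (x j)) = g 0 := by
    rw [← hgval 0]
    congr 1
    funext j
    norm_num
  have e1 : polyMean n τ (fun j => Real.exp (y j)) = g 1 := by
    rw [← hgval 1]
    congr 1
    funext j
    simp [hc]
  have e2 : polyMean n τ (fun j => Real.exp ((a • x + b • y) j)) = g b := by
    rw [← hgval b]
    congr 1
    funext j
    simp only [Pi.add_apply, Pi.smul_apply, smul_eq_mul, hc, Pi.sub_apply]
    rw [ha']
    ring
  show polyMean n τ (fun j => Real.exp ((a • x + b • y) j))
      ≤ a • polyMean n τ (fun j => Real.exp (x j)) + b • polyMean n τ (fun j => Real.exp (y j))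
  rw [e0, e1, e2]
  simpa using key
end

section
/- Let n ≥ 1 and r > 0. For every z ∈ ℂⁿ with ‖z‖ < r, the Laplacian of the function w ↦ log(1 − ‖w‖²/r²), evaluated at z, satisfies Δ(log(1 − ‖·‖²/r²))(z) ≥ −4(n+1) / (r² · (1 − ‖z‖²/r²)²). -/
open MeasureTheory

lemma hasFDerivAt_key {m : ℕ} (r : ℝ) (hr : 0 < r) (w : EuclideanSpace ℂ (Fin m)) (hw : ‖w‖ < r) :
    HasFDerivAt (fun w : EuclideanSpace ℂ (Fin m) => Real.log (1 - ‖w‖ ^ 2 / r ^ 2))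
      ((-(2 / r ^ 2) * (1 - ‖w‖ ^ 2 / r ^ 2)⁻¹) • innerSL ℝ w) w := by
  have hpos : 0 < 1 - ‖w‖ ^ 2 / r ^ 2 := by
    have h2 : ‖w‖ ^ 2 < r ^ 2 := by nlinarith [norm_nonneg w]
    have : ‖w‖ ^ 2 / r ^ 2 < 1 := (div_lt_one (by positivity)).2 h2
    linarith
  have h0 := (hasStrictFDerivAt_norm_sq w).hasFDerivAt
  have h1 := (h0.mul_const ((r ^ 2)⁻¹)).const_sub 1
  have h2 := h1.log (by simpa [div_eq_mul_inv] using hpos.ne')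
  simp only [div_eq_mul_inv]
  refine h2.congr_fderiv ?_
  ext x
  simp [ContinuousLinearMap.smul_apply]
  ring

lemma key_second_deriv {m : ℕ} (r : ℝ) (hr : 0 < r)
    (z v : EuclideanSpace ℂ (Fin m)) (hz : ‖z‖ < r) :
    iteratedFDeriv ℝ 2 (fun w : EuclideanSpace ℂ (Fin m) => Real.log (1 - ‖w‖ ^ 2 / r ^ 2)) z
      ![v, v]
      = -(2 / r ^ 2) * (1 - ‖z‖ ^ 2 / r ^ 2)⁻¹ * ‖v‖ ^ 2
        - (4 / r ^ 4) * ((1 - ‖z‖ ^ 2 / r ^ 2)⁻¹) ^ 2 * (inner ℝ z v : ℝ) ^ 2 := by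
  set f : EuclideanSpace ℂ (Fin m) → ℝ := fun w => Real.log (1 - ‖w‖ ^ 2 / r ^ 2) with hf
  have hpos : 0 < 1 - ‖z‖ ^ 2 / r ^ 2 := by
    have h2 : ‖z‖ ^ 2 < r ^ 2 := by nlinarith [norm_nonneg z]
    have : ‖z‖ ^ 2 / r ^ 2 < 1 := (div_lt_one (by positivity)).2 h2
    linarith
  -- smoothness
  have hgc : ContDiffAt ℝ 2 (fun w : EuclideanSpace ℂ (Fin m) => 1 - ‖w‖ ^ 2 / r ^ 2) z :=
    (contDiffAt_const (c := (1:ℝ))).sub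
      ((contDiff_norm_sq ℝ (E := EuclideanSpace ℂ (Fin m))).contDiffAt.div_const _)
  have hfc : ContDiffAt ℝ 2 f z := hgc.log hpos.ne'
  have hdiff : DifferentiableAt ℝ (fderiv ℝ f) z :=
    (hfc.fderiv_right (m := 1) (by norm_num)).differentiableAt (by norm_num)
  have hmem : {w : EuclideanSpace ℂ (Fin m) | ‖w‖ < r} ∈ nhds z :=
    (isOpen_lt continuous_norm continuous_const).mem_nhds hz
  have hev : (fun w : EuclideanSpace ℂ (Fin m) => fderiv ℝ f w v) =ᶠ[nhds z]
      (fun w => (-(2 / r ^ 2) * (1 - ‖w‖ ^ 2 / r ^ 2)⁻¹) * (inner ℝ w v : ℝ)) := by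
    filter_upwards [hmem] with w hw
    rw [(hasFDerivAt_key r hr w hw).fderiv]
    simp [ContinuousLinearMap.smul_apply]
  have happ : HasFDerivAt (fun w : EuclideanSpace ℂ (Fin m) => fderiv ℝ f w v)
      ((ContinuousLinearMap.apply ℝ ℝ v).comp (fderiv ℝ (fderiv ℝ f) z)) z :=
    (ContinuousLinearMap.apply ℝ ℝ v).hasFDerivAt.comp z hdiff.hasFDerivAt
  have hψ : HasFDerivAt (fun w : EuclideanSpace ℂ (Fin m) => (inner ℝ w v : ℝ)) (innerSL ℝ v) z := by
    have h := (innerSL ℝ v).hasFDerivAt (x := z)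
    have heq : (fun w : EuclideanSpace ℂ (Fin m) => (inner ℝ w v : ℝ)) = fun w => (innerSL ℝ v) w := by
      funext w; simp [real_inner_comm]
    rw [heq]; exact h
  have hg1 := ((hasStrictFDerivAt_norm_sq z).hasFDerivAt.mul_const ((r ^ 2)⁻¹)).const_sub 1
  have hinv := (hasFDerivAt_inv (by simpa [div_eq_mul_inv] using hpos.ne')).comp z hg1
  have hc := hinv.const_mul (-(2 / r ^ 2))
  have hφ := hc.mul hψ
  have hev' : fderiv ℝ (fun w : EuclideanSpace ℂ (Fin m) => fderiv ℝ f w v) z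
      = fderiv ℝ (fun w : EuclideanSpace ℂ (Fin m) =>
          (-(2 / r ^ 2) * (1 - ‖w‖ ^ 2 * (r ^ 2)⁻¹)⁻¹) * (inner ℝ w v : ℝ)) z := by
    refine Filter.EventuallyEq.fderiv_eq ?_
    simpa [div_eq_mul_inv] using hev
  have e1 : fderiv ℝ (fderiv ℝ f) z v v
      = fderiv ℝ (fun w : EuclideanSpace ℂ (Fin m) => fderiv ℝ f w v) z v := by
    rw [happ.fderiv]; rfl
  rw [iteratedFDeriv_two_apply]
  simp only [Matrix.cons_val_zero, Matrix.cons_val_one, Matrix.head_cons]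
  have hφ2 : HasFDerivAt
      (fun w : EuclideanSpace ℂ (Fin m) => -(2 / r ^ 2) * (1 - ‖w‖ ^ 2 * (r ^ 2)⁻¹)⁻¹ * (inner ℝ w v : ℝ))
      ((-(2 / r ^ 2) * (1 - ‖z‖ ^ 2 * (r ^ 2)⁻¹)⁻¹) • (innerSL ℝ) v +
        (inner ℝ z v : ℝ) • -(2 / r ^ 2) •
          (ContinuousLinearMap.smulRight (1 : ℝ →L[ℝ] ℝ) (-((1 - ‖z‖ ^ 2 * (r ^ 2)⁻¹) ^ 2)⁻¹)).comp
            (-((r ^ 2)⁻¹ • 2 • (innerSL ℝ) z))) z := hφ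
  rw [e1, hev', hφ2.fderiv]
  simp only [ContinuousLinearMap.add_apply, ContinuousLinearMap.smul_apply,
    ContinuousLinearMap.neg_apply, innerSL_apply_apply, smul_eq_mul, ContinuousLinearMap.coe_smul',
    Pi.smul_apply]
  rw [real_inner_self_eq_norm_sq]
  have : (inner ℝ v z : ℝ) = (inner ℝ z v : ℝ) := real_inner_comm z v
  simp only [ContinuousLinearMap.comp_apply, ContinuousLinearMap.smulRight_apply,
    ContinuousLinearMap.one_apply, ContinuousLinearMap.neg_apply, ContinuousLinearMap.smul_apply,
    innerSL_apply_apply, smul_eq_mul, this]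
  have hr2 : (r:ℝ) ^ 2 ≠ 0 := by positivity
  field_simp
  ring

lemma inner_single_one_re {m : ℕ} (z : EuclideanSpace ℂ (Fin m)) (j : Fin m) :
    (inner ℝ z (EuclideanSpace.single j (1:ℂ)) : ℝ) = (z j).re := by
  simp [PiLp.inner_apply, EuclideanSpace.single_apply, Complex.inner, apply_ite Complex.re,
    Finset.sum_ite_eq']

lemma inner_single_I_re {m : ℕ} (z : EuclideanSpace ℂ (Fin m)) (j : Fin m) :
    (inner ℝ z (EuclideanSpace.single j Complex.I) : ℝ) = (z j).im := by
  simp [PiLp.inner_apply, EuclideanSpace.single_apply, Complex.inner, apply_ite Complex.re,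
    Finset.sum_ite_eq']

lemma sum_re_im_sq {m : ℕ} (z : EuclideanSpace ℂ (Fin m)) :
    ∑ j, ((z j).re ^ 2 + (z j).im ^ 2) = ‖z‖ ^ 2 := by
  have h : ‖z‖ ^ 2 = ∑ j, ‖z j‖ ^ 2 := by
    rw [EuclideanSpace.norm_eq, Real.sq_sqrt (by positivity)]
  rw [h]
  refine Finset.sum_congr rfl fun j _ => ?_
  rw [Complex.sq_norm, Complex.normSq_apply]
  ring

/-- Inequality (12): for `‖z‖ < r`, the Laplacian of `w ↦ log(1 − ‖w‖²/r²)` at `z` is at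
least `−4(n+1)/(r²(1 − ‖z‖²/r²)²)`. -/
theorem lap_log_one_sub_sq_ge (n : ℕ) (hn : 1 ≤ n) (r : ℝ) (hr : 0 < r)
    (z : EuclideanSpace ℂ (Fin n)) (hz : ‖z‖ < r) :
    -(4 * (n + 1)) / (r ^ 2 * (1 - ‖z‖ ^ 2 / r ^ 2) ^ 2)
      ≤ lapE n (fun w => Real.log (1 - ‖w‖ ^ 2 / r ^ 2)) z := by
  have hz2 : ‖z‖ ^ 2 < r ^ 2 := by nlinarith [norm_nonneg z]
  have hpos : 0 < 1 - ‖z‖ ^ 2 / r ^ 2 := by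
    have : ‖z‖ ^ 2 / r ^ 2 < 1 := (div_lt_one (by positivity)).2 hz2
    linarith
  have hle1 : 1 - ‖z‖ ^ 2 / r ^ 2 ≤ 1 := by
    have : 0 ≤ ‖z‖ ^ 2 / r ^ 2 := by positivity
    linarith
  set u : ℝ := 1 - ‖z‖ ^ 2 / r ^ 2 with hu
  have hlap : lapE n (fun w => Real.log (1 - ‖w‖ ^ 2 / r ^ 2)) z
      = (n : ℝ) * (-(4 / r ^ 2) * u⁻¹) - (4 / r ^ 4) * (u⁻¹) ^ 2 * ‖z‖ ^ 2 := by
    unfold lapE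
    have step : ∀ j : Fin n,
        (iteratedFDeriv ℝ 2 (fun w : EuclideanSpace ℂ (Fin n) => Real.log (1 - ‖w‖ ^ 2 / r ^ 2)) z
            ![EuclideanSpace.single j (1 : ℂ), EuclideanSpace.single j (1 : ℂ)] +
          iteratedFDeriv ℝ 2 (fun w : EuclideanSpace ℂ (Fin n) => Real.log (1 - ‖w‖ ^ 2 / r ^ 2)) z
            ![EuclideanSpace.single j Complex.I, EuclideanSpace.single j Complex.I])
        = -(4 / r ^ 2) * u⁻¹ - (4 / r ^ 4) * (u⁻¹) ^ 2 * ((z j).re ^ 2 + (z j).im ^ 2) := by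
      intro j
      rw [key_second_deriv r hr z _ hz, key_second_deriv r hr z _ hz,
        inner_single_one_re, inner_single_I_re]
      have e1 : ‖EuclideanSpace.single j (1:ℂ)‖ = 1 := by simp [EuclideanSpace.norm_single]
      have e2 : ‖EuclideanSpace.single j Complex.I‖ = 1 := by simp [EuclideanSpace.norm_single]
      rw [e1, e2, ← hu]
      ring
    rw [Finset.sum_congr rfl fun j _ => step j, Finset.sum_sub_distrib, Finset.sum_const,
      ← Finset.mul_sum, sum_re_im_sq]
    simp [Finset.card_univ, nsmul_eq_mul]
  clear_value u
  rw [hlap, div_le_iff₀ (by positivity)]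
  have hexp : ((n : ℝ) * (-(4 / r ^ 2) * u⁻¹) - 4 / r ^ 4 * u⁻¹ ^ 2 * ‖z‖ ^ 2) * (r ^ 2 * u ^ 2)
      = -(4 * n) * u - 4 * (‖z‖ ^ 2 / r ^ 2) := by
    have hrne : (r:ℝ) ≠ 0 := hr.ne'
    have hune : u ≠ 0 := hpos.ne'
    field_simp
  rw [hexp]
  have h1 : 0 ≤ (n : ℝ) * (1 - u) := mul_nonneg (Nat.cast_nonneg n) (by linarith)
  have h2 : ‖z‖ ^ 2 / r ^ 2 ≤ 1 := (div_le_one (by positivity)).2 hz2.le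
  have h1' : (n : ℝ) * u ≤ (n : ℝ) := by nlinarith
  linarith
end

section
/- Let F : [1,∞) → ℝ be a nondecreasing differentiable function with F(1) ≥ 1. Then for every δ > 0 there exists a measurable set E ⊆ [1,∞) with ∫_E (1/t) dt < ∞ such that for every r ∈ [1,∞) \ E one has r · F′(r) ≤ F(r)^{1+δ}. -/
open MeasureTheory

/-- Borel-type growth lemma: if `F : [1,∞) → ℝ` is nondecreasing, differentiable, with
`F(1) ≥ 1`, then for every `δ > 0` there is a set `E ⊆ [1,∞)` of finite logarithmic measure
(`∫_E dt/t < ∞`) outside of which `r·F′(r) ≤ F(r)^{1+δ}`. -/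
theorem borel_growth_lemma (F : ℝ → ℝ)
    (hmono : MonotoneOn F (Set.Ici 1))
    (hdiff : ∀ r ∈ Set.Ici (1 : ℝ), DifferentiableAt ℝ F r)
    (hF1 : 1 ≤ F 1) (δ : ℝ) (hδ : 0 < δ) :
    ∃ E : Set ℝ, E ⊆ Set.Ici 1 ∧ MeasurableSet E ∧
      IntegrableOn (fun t => 1 / t) E volume ∧
      ∀ r ∈ Set.Ici (1 : ℝ) \ E, r * deriv F r ≤ F r ^ (1 + δ) := by
  -- Basic facts
  have hFge : ∀ r ∈ Set.Ici (1 : ℝ), (1 : ℝ) ≤ F r := fun r hr =>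
    hF1.trans (hmono Set.self_mem_Ici hr hr)
  have hFpos : ∀ r ∈ Set.Ici (1 : ℝ), (0 : ℝ) < F r := fun r hr =>
    zero_lt_one.trans_le (hFge r hr)
  -- the derivative of F is nonnegative on [1,∞)
  have hd0 : ∀ r ∈ Set.Ici (1 : ℝ), 0 ≤ deriv F r := by
    intro r hr
    have h := ((hdiff r hr).hasDerivAt.hasDerivWithinAt (s := Set.Ioi r))
    rw [hasDerivWithinAt_iff_tendsto_slope] at h
    have hss : Set.Ioi r \ {r} = Set.Ioi r := by
      apply Set.diff_singleton_eq_self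
      simp
    rw [hss] at h
    refine ge_of_tendsto h ?_
    filter_upwards [self_mem_nhdsWithin] with y hy
    have hyr : r < y := hy
    rw [slope_def_field]
    apply div_nonneg _ (by linarith)
    have : F r ≤ F y := hmono hr (hr.trans hyr.le) hyr.le
    linarith
  -- auxiliary function G and its derivative g'
  set g' : ℝ → ℝ := fun r => F r ^ (-δ - 1) * deriv F r with hg'def
  set G : ℝ → ℝ := fun t => -(1 / δ) * F (max t 1) ^ (-δ) with hGdef
  have hmax : ∀ t : ℝ, 1 ≤ t → max t 1 = t := fun t ht => max_eq_left ht
  -- derivative of the un-truncated version on [1,∞)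
  have hG0 : ∀ r ∈ Set.Ici (1 : ℝ),
      HasDerivAt (fun t => -(1 / δ) * F t ^ (-δ)) (g' r) r := by
    intro r hr
    have hFr := hFpos r hr
    have h1 : HasDerivAt (fun x : ℝ => x ^ (-δ)) (-δ * F r ^ (-δ - 1)) (F r) :=
      Real.hasDerivAt_rpow_const (Or.inl hFr.ne')
    have h2 := h1.comp r (hdiff r hr).hasDerivAt
    have h3 := h2.const_mul (-(1 / δ))
    have e : g' r = -(1 / δ) * (-δ * F r ^ (-δ - 1) * deriv F r) := by
      show F r ^ (-δ - 1) * deriv F r = -(1 / δ) * (-δ * F r ^ (-δ - 1) * deriv F r)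
      rw [← mul_assoc, ← mul_assoc, neg_mul_neg, one_div, inv_mul_cancel₀ hδ.ne', one_mul]
    rw [e]
    exact h3
  -- derivative of G on (1,∞)
  have hGd : ∀ r ∈ Set.Ioi (1 : ℝ), HasDerivAt G (g' r) r := by
    intro r hr
    have heq : G =ᶠ[nhds r] fun t => -(1 / δ) * F t ^ (-δ) := by
      filter_upwards [Ioi_mem_nhds hr] with t ht
      simp only [hGdef, hmax t (le_of_lt ht)]
    exact (hG0 r (Set.mem_Ici.mpr (le_of_lt hr))).congr_of_eventuallyEq heq
  -- continuity of G everywhere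
  have hGcont : Continuous G := by
    rw [continuous_iff_continuousAt]
    intro t
    have hmaxcont : ContinuousAt (fun s : ℝ => max s 1) t :=
      (continuous_id.max continuous_const).continuousAt
    have hFc : ContinuousAt F (max t 1) :=
      (hdiff _ (le_max_right t 1)).continuousAt
    have hFm : ContinuousAt (fun s => F (max s 1)) t :=
      ContinuousAt.comp (g := F) (f := fun s => max s 1) (x := t) hFc hmaxcont
    have hrp : ContinuousAt (fun x : ℝ => x ^ (-δ)) (F (max t 1)) :=
      Real.continuousAt_rpow_const _ _ (Or.inl (hFpos _ (le_max_right t 1)).ne')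
    exact continuousAt_const.mul
      (ContinuousAt.comp (g := fun x : ℝ => x ^ (-δ)) (f := fun s => F (max s 1)) (x := t)
        hrp hFm)
  -- G is monotone
  have hGmono : Monotone G := by
    intro a b hab
    have ha1 : (1 : ℝ) ≤ max a 1 := le_max_right a 1
    have hb1 : (1 : ℝ) ≤ max b 1 := le_max_right b 1
    have hFab : F (max a 1) ≤ F (max b 1) :=
      hmono ha1 hb1 (max_le_max hab le_rfl)
    have hpa := hFpos _ ha1
    have hpb := hFpos _ hb1
    have h1 : F (max b 1) ^ (-δ) ≤ F (max a 1) ^ (-δ) := by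
      rw [Real.rpow_neg hpa.le, Real.rpow_neg hpb.le]
      apply inv_anti₀ (Real.rpow_pos_of_pos hpa _)
      exact Real.rpow_le_rpow hpa.le hFab hδ.le
    simp only [hGdef]
    nlinarith [one_div_pos.mpr hδ]
  -- G is bounded above (by 0), hence tends to a limit at infinity
  have hGbdd : BddAbove (Set.range G) := by
    refine ⟨0, ?_⟩
    rintro x ⟨t, rfl⟩
    simp only [hGdef]
    have : 0 ≤ F (max t 1) ^ (-δ) := (Real.rpow_pos_of_pos (hFpos _ (le_max_right t 1)) _).le
    nlinarith [one_div_pos.mpr hδ]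
  have hGtend : Filter.Tendsto G Filter.atTop (nhds (⨆ t, G t)) :=
    tendsto_atTop_ciSup hGmono hGbdd
  -- g' is nonnegative on (1,∞)
  have hg'nonneg : ∀ x ∈ Set.Ioi (1 : ℝ), 0 ≤ g' x := fun x hx =>
    mul_nonneg (Real.rpow_pos_of_pos (hFpos x (Set.mem_Ici.mpr (le_of_lt hx))) _).le (hd0 x (Set.mem_Ici.mpr (le_of_lt hx)))
  -- g' is integrable on (1,∞)
  have hint : IntegrableOn g' (Set.Ioi 1) volume :=
    integrableOn_Ioi_deriv_of_nonneg (hGcont.continuousWithinAt) hGd hg'nonneg hGtend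
  have hintIci : IntegrableOn g' (Set.Ici 1) volume := by
    rwa [integrableOn_Ici_iff_integrableOn_Ioi]
  -- the exceptional set
  refine ⟨{r | 1 ≤ r ∧ F (max r 1) ^ (1 + δ) < r * deriv F r}, fun r hr => hr.1, ?_, ?_, ?_⟩
  · -- measurability
    have hFm : Continuous fun s : ℝ => F (max s 1) := by
      rw [continuous_iff_continuousAt]
      intro t
      exact ContinuousAt.comp (g := F) (f := fun s => max s 1) (x := t)
        ((hdiff _ (le_max_right t 1)).continuousAt)
        ((continuous_id.max continuous_const).continuousAt)
    have h1 : Measurable fun r : ℝ => F (max r 1) ^ (1 + δ) :=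
      (hFm.rpow_const (fun x => Or.inr (by positivity))).measurable
    have h2 : Measurable fun r : ℝ => r * deriv F r :=
      measurable_id.mul (measurable_deriv F)
    exact (measurableSet_Ici.inter (measurableSet_lt h1 h2))
  · -- integrability of 1/t on E
    have hE : MeasurableSet {r : ℝ | 1 ≤ r ∧ F (max r 1) ^ (1 + δ) < r * deriv F r} := by
      have hFm : Continuous fun s : ℝ => F (max s 1) := by
        rw [continuous_iff_continuousAt]
        intro t
        exact ContinuousAt.comp (g := F) (f := fun s => max s 1) (x := t)
          ((hdiff _ (le_max_right t 1)).continuousAt)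
          ((continuous_id.max continuous_const).continuousAt)
      exact (measurableSet_Ici.inter (measurableSet_lt
        ((hFm.rpow_const (fun x => Or.inr (by positivity))).measurable)
        (measurable_id.mul (measurable_deriv F))))
    have hsub : {r : ℝ | 1 ≤ r ∧ F (max r 1) ^ (1 + δ) < r * deriv F r} ⊆ Set.Ici 1 :=
      fun r hr => hr.1
    refine Integrable.mono (hintIci.mono_set hsub) ?_ ?_
    · exact ((measurable_const.div measurable_id).aestronglyMeasurable)
    · filter_upwards [ae_restrict_mem hE] with t ht
      obtain ⟨ht1, htE⟩ := ht
      rw [hmax t ht1] at htE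
      have ht0 : (0 : ℝ) < t := zero_lt_one.trans_le ht1
      have hFt : (0 : ℝ) < F t := hFpos t ht1
      have hk : F t ^ (-δ - 1) * F t ^ (1 + δ) = 1 := by
        rw [← Real.rpow_add hFt]
        have he : -δ - 1 + (1 + δ) = 0 := by ring
        rw [he, Real.rpow_zero]
      have hA : (0 : ℝ) < F t ^ (-δ - 1) := Real.rpow_pos_of_pos hFt _
      have h1 : (1 : ℝ) ≤ t * g' t := by
        have : F t ^ (-δ - 1) * (F t ^ (1 + δ)) ≤ F t ^ (-δ - 1) * (t * deriv F t) :=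
          mul_le_mul_of_nonneg_left htE.le hA.le
        simp only [hg'def]
        nlinarith
      have h2 : (1 : ℝ) / t ≤ g' t := by
        rw [div_le_iff₀ ht0]
        linarith [h1]
      have hg'nn : 0 ≤ g' t := le_trans (by positivity) h2
      rw [Real.norm_eq_abs, Real.norm_eq_abs, abs_of_nonneg (by positivity),
        abs_of_nonneg hg'nn]
      exact h2
  · -- the growth estimate off E
    rintro r ⟨hr1, hrE⟩
    simp only [Set.mem_setOf_eq, hmax r hr1, not_and, not_lt] at hrE
    exact hrE hr1
end
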